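/- arXiv:1810.10806 — 3 statements merged into one kernel-verified Lean document; each statement's English description precedes it below -/
import Mathlib

section
/- Let p, q be complex numbers with |p| < 1, |q| < 1 and let u, v be fixed square roots, u² = p, v² = q. Then for any z ≠ 0 such that all factors are defined, the quadratic transformation Γ(z²;p,q) = Γ(z;p,q)·Γ(−z;p,q)·Γ(vz;p,q)·Γ(−vz;p,q)·Γ(uz;p,q)·Γ(−uz;p,q)·Γ(uvz;p,q)·Γ(−uvz;p,q) holds. -/
open Complex Real Filter Topology

/-- The infinite q-Pochhammer symbol (z;q)_inf. -/
noncomputable def qpoch (z q : ℂ) : ℂ := ∏' j : ℕ, (1 - z * q ^ j)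

/-- The elliptic gamma function Γ(z;p,q). -/
noncomputable def egamma (z p q : ℂ) : ℂ :=
  ∏' jk : ℕ × ℕ, (1 - z⁻¹ * p ^ (jk.1 + 1) * q ^ (jk.2 + 1)) / (1 - z * p ^ jk.1 * q ^ jk.2)

/-- The short Jacobi theta function θ(z;p) (base first argument). -/
noncomputable def theta (p z : ℂ) : ℂ := qpoch z p * qpoch (p * z⁻¹) p

namespace EGammaAux

/-- The general factor of the elliptic gamma function. -/
noncomputable def F (p q w : ℂ) (jk : ℕ × ℕ) : ℂ :=
  (1 - w⁻¹ * p ^ (jk.1 + 1) * q ^ (jk.2 + 1)) / (1 - w * p ^ jk.1 * q ^ jk.2)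

lemma egamma_eq (w p q : ℂ) : egamma w p q = ∏' jk : ℕ × ℕ, F p q w jk := rfl

lemma summable_pq {p q : ℂ} (hp : ‖p‖ < 1) (hq : ‖q‖ < 1) :
    Summable (fun jk : ℕ × ℕ => ‖p‖ ^ jk.1 * ‖q‖ ^ jk.2) :=
  (summable_geometric_of_lt_one (norm_nonneg p) hp).mul_of_nonneg
    (summable_geometric_of_lt_one (norm_nonneg q) hq)
    (fun n => pow_nonneg (norm_nonneg p) n) (fun n => pow_nonneg (norm_nonneg q) n)

lemma multipliable_F (p q w : ℂ) (hp : ‖p‖ < 1) (hq : ‖q‖ < 1)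
    (hd : ∀ j k : ℕ, w * p ^ j * q ^ k ≠ 1) : Multipliable (F p q w) := by
  by_cases h0 : ∃ jk, F p q w jk = 0
  · obtain ⟨i0, hi0⟩ := h0
    refine ⟨0, ?_⟩
    have hev : ∀ᶠ s : Finset (ℕ × ℕ) in atTop, ∏ i ∈ s, F p q w i = 0 :=
      eventually_atTop.2 ⟨{i0}, fun s hs =>
        Finset.prod_eq_zero (Finset.singleton_subset_iff.mp hs) hi0⟩
    exact Tendsto.congr' (by filter_upwards [hev] with s hs using hs.symm) tendsto_const_nhds
  push_neg at h0
  have hD : ∀ jk : ℕ × ℕ, (1 - w * p ^ jk.1 * q ^ jk.2) ≠ 0 :=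
    fun jk => sub_ne_zero_of_ne (Ne.symm (hd jk.1 jk.2))
  set c : ℂ := w - w⁻¹ * p * q with hc
  have hFr : ∀ jk : ℕ × ℕ, F p q w jk
      = 1 + c * (p ^ jk.1 * q ^ jk.2) / (1 - w * (p ^ jk.1 * q ^ jk.2)) := by
    intro jk
    have h : (1 : ℂ) - w * (p ^ jk.1 * q ^ jk.2) ≠ 0 := by
      rw [← mul_assoc]; exact hD jk
    rw [F, show (1 : ℂ) - w * p ^ jk.1 * q ^ jk.2 = 1 - w * (p ^ jk.1 * q ^ jk.2) from by ring,
      div_eq_iff h, add_mul, one_mul, div_mul_cancel₀ _ h, hc]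
    ring
  have htsnorm : Summable (fun jk : ℕ × ℕ => ‖p ^ jk.1 * q ^ jk.2‖) := by
    have : (fun jk : ℕ × ℕ => ‖p ^ jk.1 * q ^ jk.2‖)
        = fun jk : ℕ × ℕ => ‖p‖ ^ jk.1 * ‖q‖ ^ jk.2 := by
      funext jk; rw [norm_mul, norm_pow, norm_pow]
    rw [this]; exact summable_pq hp hq
  have hts : Summable (fun jk : ℕ × ℕ => p ^ jk.1 * q ^ jk.2) := Summable.of_norm htsnorm
  have htn : Tendsto (fun jk : ℕ × ℕ => ‖p ^ jk.1 * q ^ jk.2‖) cofinite (𝓝 0) := by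
    simpa using hts.tendsto_cofinite_zero.norm
  have hlog : Summable (fun jk : ℕ × ℕ => Complex.log (F p q w jk)) := by
    apply Summable.of_norm_bounded_eventually
      (g := fun jk : ℕ × ℕ => 3 * (‖c‖ + 1) * (‖p‖ ^ jk.1 * ‖q‖ ^ jk.2))
      ((summable_pq hp hq).mul_left _)
    have h1 : ∀ᶠ jk : ℕ × ℕ in cofinite, ‖p ^ jk.1 * q ^ jk.2‖ ≤ 1 / (2 * (‖w‖ + 1)) :=
      htn.eventually_le_const (by positivity)
    have h2 : ∀ᶠ jk : ℕ × ℕ in cofinite, ‖p ^ jk.1 * q ^ jk.2‖ ≤ 1 / (4 * (‖c‖ + 1)) :=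
      htn.eventually_le_const (by positivity)
    filter_upwards [h1, h2] with jk hw1 hw2
    rw [hFr jk]
    set t : ℂ := p ^ jk.1 * q ^ jk.2 with hT
    have htnn : (0:ℝ) ≤ ‖t‖ := norm_nonneg t
    have hwnn : (0:ℝ) ≤ ‖w‖ := norm_nonneg w
    have hcnn : (0:ℝ) ≤ ‖c‖ := norm_nonneg c
    have hwt : ‖w * t‖ ≤ 1/2 := by
      rw [norm_mul]
      calc ‖w‖ * ‖t‖ ≤ (‖w‖ + 1) * (1 / (2 * (‖w‖ + 1))) :=
            mul_le_mul (by linarith) hw1 htnn (by positivity)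
        _ = 1/2 := by field_simp
    have hDge : (1:ℝ)/2 ≤ ‖1 - w * t‖ := by
      have h := norm_sub_norm_le (1:ℂ) (w * t)
      simp only [norm_one] at h
      linarith
    have hD' : (0:ℝ) < ‖1 - w * t‖ := by linarith
    have hrle : ‖c * t / (1 - w * t)‖ ≤ 2 * ‖c‖ * ‖t‖ := by
      rw [norm_div, norm_mul, div_le_iff₀ hD']
      nlinarith [mul_le_mul_of_nonneg_left hDge (by positivity : (0:ℝ) ≤ 2 * ‖c‖ * ‖t‖)]
    have hrhalf : ‖c * t / (1 - w * t)‖ ≤ 1/2 := by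
      calc ‖c * t / (1 - w * t)‖ ≤ 2 * ‖c‖ * ‖t‖ := hrle
        _ ≤ (2 * (‖c‖ + 1)) * (1 / (4 * (‖c‖ + 1))) :=
            mul_le_mul (by linarith) hw2 htnn (by positivity)
        _ ≤ 1/2 := by
            rw [mul_one_div, div_le_div_iff₀ (by positivity) (by norm_num)]
            ring_nf
            nlinarith
    have hnormt : ‖t‖ = ‖p‖ ^ jk.1 * ‖q‖ ^ jk.2 := by
      rw [hT, norm_mul, norm_pow, norm_pow]
    calc ‖Complex.log (1 + c * t / (1 - w * t))‖
        ≤ 3/2 * ‖c * t / (1 - w * t)‖ := Complex.norm_log_one_add_half_le_self hrhalf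
      _ ≤ 3/2 * (2 * ‖c‖ * ‖t‖) := by nlinarith
      _ ≤ 3 * (‖c‖ + 1) * (‖p‖ ^ jk.1 * ‖q‖ ^ jk.2) := by rw [← hnormt]; nlinarith
  exact Complex.multipliable_of_summable_log hlog

lemma pair_F (p q w : ℂ) (j k : ℕ) :
    F p q w (j, k) * F p q (-w) (j, k) =
      (1 - (w ^ 2)⁻¹ * p ^ (2 * j + 2) * q ^ (2 * k + 2)) /
        (1 - w ^ 2 * p ^ (2 * j) * q ^ (2 * k)) := by
  show (1 - w⁻¹ * p ^ (j + 1) * q ^ (k + 1)) / (1 - w * p ^ j * q ^ k) *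
      ((1 - (-w)⁻¹ * p ^ (j + 1) * q ^ (k + 1)) / (1 - -w * p ^ j * q ^ k)) = _
  rw [div_mul_div_comm, inv_neg]
  rw [show (1 - w⁻¹ * p ^ (j + 1) * q ^ (k + 1)) * (1 - -w⁻¹ * p ^ (j + 1) * q ^ (k + 1))
      = 1 - (w⁻¹) ^ 2 * p ^ (2 * j + 2) * q ^ (2 * k + 2) from by ring,
    show (1 - w * p ^ j * q ^ k) * (1 - -w * p ^ j * q ^ k)
      = 1 - w ^ 2 * p ^ (2 * j) * q ^ (2 * k) from by ring,
    inv_pow]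

lemma inv_mul_pow (x Z : ℂ) (m : ℕ) : (x * Z)⁻¹ * x ^ (m + 2) = Z⁻¹ * x ^ (m + 1) := by
  rcases eq_or_ne x 0 with h | h
  · simp [h]
  · rw [mul_inv, show x ^ (m + 2) = x * x ^ (m + 1) from by ring,
      show x⁻¹ * Z⁻¹ * (x * x ^ (m + 1)) = x⁻¹ * x * (Z⁻¹ * x ^ (m + 1)) from by ring,
      inv_mul_cancel₀ h, one_mul]

/-- The equivalence (j,k,a,b) ↦ (2j+a, 2k+b). -/
def E : (ℕ × ℕ) × (Fin 2 × Fin 2) ≃ ℕ × ℕ where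
  toFun x := (2 * x.1.1 + (x.2.1 : ℕ), 2 * x.1.2 + (x.2.2 : ℕ))
  invFun y := ((y.1 / 2, y.2 / 2),
    (⟨y.1 % 2, Nat.mod_lt _ two_pos⟩, ⟨y.2 % 2, Nat.mod_lt _ two_pos⟩))
  left_inv := by
    rintro ⟨⟨j, k⟩, ⟨⟨a, ha⟩, ⟨b, hb⟩⟩⟩
    simp only [Prod.mk.injEq, Fin.mk.injEq]
    omega
  right_inv := by
    rintro ⟨J, K⟩
    simp only [Prod.mk.injEq]
    omega

lemma key (p q u v z : ℂ) (hu : u ^ 2 = p) (hv : v ^ 2 = q) (j k : ℕ) :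
    (∏ ab : Fin 2 × Fin 2, F p q (z ^ 2) (2 * j + (ab.1 : ℕ), 2 * k + (ab.2 : ℕ))) =
      F p q z (j, k) * F p q (-z) (j, k) * F p q (v * z) (j, k) * F p q (-(v * z)) (j, k) *
        F p q (u * z) (j, k) * F p q (-(u * z)) (j, k) *
        F p q (u * v * z) (j, k) * F p q (-(u * v * z)) (j, k) := by
  rw [show ∀ f1 f2 f3 f4 f5 f6 f7 f8 : ℂ,
      f1 * f2 * f3 * f4 * f5 * f6 * f7 * f8 = f1 * f2 * (f3 * f4 * (f5 * f6 * (f7 * f8)))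
      from fun _ _ _ _ _ _ _ _ => by ring]
  rw [pair_F p q z j k, pair_F p q (v * z) j k, pair_F p q (u * z) j k,
    pair_F p q (u * v * z) j k]
  rw [show (v * z) ^ 2 = q * z ^ 2 from by rw [mul_pow, hv],
    show (u * z) ^ 2 = p * z ^ 2 from by rw [mul_pow, hu],
    show (u * v * z) ^ 2 = p * (q * z ^ 2) from by rw [mul_pow, mul_pow, hu, hv, mul_assoc]]
  rw [show (q * z ^ 2)⁻¹ * p ^ (2 * j + 2) * q ^ (2 * k + 2)
      = (q * z ^ 2)⁻¹ * q ^ (2 * k + 2) * p ^ (2 * j + 2) from by ring]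
  rw [inv_mul_pow p (z ^ 2) (2 * j), inv_mul_pow p (q * z ^ 2) (2 * j)]
  rw [show (q * z ^ 2)⁻¹ * p ^ (2 * j + 1) * q ^ (2 * k + 2)
      = (q * z ^ 2)⁻¹ * q ^ (2 * k + 2) * p ^ (2 * j + 1) from by ring]
  rw [inv_mul_pow q (z ^ 2) (2 * k)]
  rw [show (∏ ab : Fin 2 × Fin 2, F p q (z ^ 2) (2 * j + (ab.1 : ℕ), 2 * k + (ab.2 : ℕ)))
      = F p q (z ^ 2) (2 * j, 2 * k) * F p q (z ^ 2) (2 * j, 2 * k + 1) *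
        (F p q (z ^ 2) (2 * j + 1, 2 * k) * F p q (z ^ 2) (2 * j + 1, 2 * k + 1)) from by
    rw [Fintype.prod_prod_type]
    simp only [Fin.prod_univ_two, Fin.val_zero, Fin.val_one, add_zero]]
  simp only [F]
  simp only [div_mul_div_comm]
  congr 1 <;> ring

end EGammaAux

set_option maxHeartbeats 1600000 in
open EGammaAux in
theorem egamma_quadratic_transformation (p q u v z : ℂ) (hp : ‖p‖ < 1) (hq : ‖q‖ < 1)
    (hu : u ^ 2 = p) (hv : v ^ 2 = q) (hz0 : z ≠ 0)
    (hdef : ∀ w ∈ ({z ^ 2, z, -z, v * z, -(v * z), u * z, -(u * z), u * v * z, -(u * v * z)} : Set ℂ),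
      ∀ j k : ℕ, w * p ^ j * q ^ k ≠ 1) :
    egamma (z ^ 2) p q =
      egamma z p q * egamma (-z) p q * egamma (v * z) p q * egamma (-(v * z)) p q *
        egamma (u * z) p q * egamma (-(u * z)) p q *
        egamma (u * v * z) p q * egamma (-(u * v * z)) p q := by
  have M0 : Multipliable (F p q (z ^ 2)) := multipliable_F p q _ hp hq (hdef _ (by simp))
  have M1 : Multipliable (F p q z) := multipliable_F p q _ hp hq (hdef _ (by simp))
  have M2 : Multipliable (F p q (-z)) := multipliable_F p q _ hp hq (hdef _ (by simp))
  have M3 : Multipliable (F p q (v * z)) := multipliable_F p q _ hp hq (hdef _ (by simp))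
  have M4 : Multipliable (F p q (-(v * z))) := multipliable_F p q _ hp hq (hdef _ (by simp))
  have M5 : Multipliable (F p q (u * z)) := multipliable_F p q _ hp hq (hdef _ (by simp))
  have M6 : Multipliable (F p q (-(u * z))) := multipliable_F p q _ hp hq (hdef _ (by simp))
  have M7 : Multipliable (F p q (u * v * z)) := multipliable_F p q _ hp hq (hdef _ (by simp))
  have M8 : Multipliable (F p q (-(u * v * z))) := multipliable_F p q _ hp hq (hdef _ (by simp))
  have H : HasProd (fun jk : ℕ × ℕ =>
      F p q z jk * F p q (-z) jk * F p q (v * z) jk * F p q (-(v * z)) jk *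
        F p q (u * z) jk * F p q (-(u * z)) jk * F p q (u * v * z) jk * F p q (-(u * v * z)) jk)
      ((∏' jk, F p q z jk) * (∏' jk, F p q (-z) jk) * (∏' jk, F p q (v * z) jk) *
        (∏' jk, F p q (-(v * z)) jk) * (∏' jk, F p q (u * z) jk) * (∏' jk, F p q (-(u * z)) jk) *
        (∏' jk, F p q (u * v * z) jk) * (∏' jk, F p q (-(u * v * z)) jk)) :=
    ((((((M1.hasProd.mul M2.hasProd).mul M3.hasProd).mul M4.hasProd).mul
      M5.hasProd).mul M6.hasProd).mul M7.hasProd).mul M8.hasProd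
  simp only [egamma_eq]
  calc (∏' jk : ℕ × ℕ, F p q (z ^ 2) jk)
      = ∏' x : (ℕ × ℕ) × (Fin 2 × Fin 2), F p q (z ^ 2) (E x) := (E.tprod_eq _).symm
    _ = ∏' (jk : ℕ × ℕ) (ab : Fin 2 × Fin 2), F p q (z ^ 2) (E (jk, ab)) := by
        exact Multipliable.tprod_prod' (E.multipliable_iff.mpr M0)
          (fun jk => (hasProd_fintype _).multipliable)
    _ = ∏' jk : ℕ × ℕ, ∏ ab : Fin 2 × Fin 2, F p q (z ^ 2) (E (jk, ab)) :=
        tprod_congr fun jk => tprod_fintype _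
    _ = ∏' jk : ℕ × ℕ,
        (F p q z jk * F p q (-z) jk * F p q (v * z) jk * F p q (-(v * z)) jk *
          F p q (u * z) jk * F p q (-(u * z)) jk *
          F p q (u * v * z) jk * F p q (-(u * v * z)) jk) := by
        refine tprod_congr fun jk => ?_
        have h := key p q u v z hu hv jk.1 jk.2
        simp only [E, Equiv.coe_fn_mk]
        exact h
    _ = _ := H.tprod_eq
end

section
/- (Jacobi triple product identity) For any complex p with |p| < 1 and any z ≠ 0, one has (z;p)_∞ (p z^{−1};p)_∞ = (1/(p;p)_∞) · ∑_{n∈ℤ} p^{n(n−1)/2} (−z)^n, the bilateral series converging absolutely. -/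
open Complex Real Filter Topology

open Finset

namespace JTP

variable {q z : ℂ}

lemma one_sub_pow_ne (hq1 : ‖q‖ < 1) {i : ℕ} (hi : i ≠ 0) : 1 - q ^ i ≠ 0 := by
  intro h
  rw [sub_eq_zero] at h
  have h2 : ‖q ^ i‖ < 1 := by
    rw [norm_pow]; exact pow_lt_one₀ (norm_nonneg q) hq1 hi
  rw [← h] at h2; simp at h2

lemma one_sub_mul_pow_ne (hq1 : ‖q‖ < 1) (j : ℕ) : 1 - q * q ^ j ≠ 0 := by
  rw [← pow_succ']; exact one_sub_pow_ne hq1 (Nat.succ_ne_zero j)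

lemma hasProd_zero_of_exists {f : ℕ → ℂ} (h : ∃ j, f j = 0) : HasProd f 0 := by
  obtain ⟨j, hj⟩ := h
  have h1 : ∀ᶠ s : Finset ℕ in atTop, (0 : ℂ) = ∏ i ∈ s, f i := by
    filter_upwards [eventually_ge_atTop ({j} : Finset ℕ)] with s hs
    exact (Finset.prod_eq_zero (hs (Finset.mem_singleton_self j)) hj).symm
  exact Tendsto.congr' h1 tendsto_const_nhds

lemma summable_log_one_sub (hq1 : ‖q‖ < 1) (w : ℂ) :
    Summable (fun j : ℕ => Complex.log (1 - w * q ^ j)) := by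
  apply summable_of_isBigO_nat (summable_geometric_of_lt_one (norm_nonneg q) hq1)
  rw [Asymptotics.isBigO_iff]
  refine ⟨(3/2) * ‖w‖, ?_⟩
  have h0 : Tendsto (fun j : ℕ => ‖w‖ * ‖q‖ ^ j) atTop (𝓝 (‖w‖ * 0)) :=
    (tendsto_pow_atTop_nhds_zero_of_lt_one (norm_nonneg q) hq1).const_mul ‖w‖
  rw [mul_zero] at h0
  filter_upwards [h0.eventually_le_const (by norm_num : (0:ℝ) < 1/2)] with j hj
  have hn : ‖-(w * q ^ j)‖ ≤ 1/2 := by rwa [norm_neg, norm_mul, norm_pow]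
  have := Complex.norm_log_one_add_half_le_self hn
  rw [show (1 : ℂ) + -(w * q ^ j) = 1 - w * q ^ j by ring] at this
  refine this.trans ?_
  rw [norm_neg, norm_mul, norm_pow]
  rw [Real.norm_eq_abs, _root_.abs_of_nonneg (pow_nonneg (norm_nonneg q) j)]
  ring_nf
  exact le_refl _

lemma multipliable_one_sub (hq1 : ‖q‖ < 1) (w : ℂ) :
    Multipliable (fun j : ℕ => 1 - w * q ^ j) := by
  by_cases h : ∃ j, 1 - w * q ^ j = 0
  · exact ⟨0, hasProd_zero_of_exists h⟩
  · push_neg at h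
    exact Complex.multipliable_of_summable_log (summable_log_one_sub hq1 w)

lemma qpoch_self_ne_zero (hq1 : ‖q‖ < 1) : qpoch q q ≠ 0 := by
  have h := Complex.cexp_tsum_eq_tprod (f := fun j => 1 - q * q ^ j)
    (fun j => one_sub_mul_pow_ne hq1 j) (summable_log_one_sub hq1 q)
  unfold qpoch
  rw [← h]
  exact Complex.exp_ne_zero _

noncomputable def D (q : ℂ) (k : ℕ) : ℂ := ∏ i ∈ range k, (1 - q * q ^ i)

noncomputable def gb (q : ℂ) (m k : ℕ) : ℂ := D q m / (D q (m - k) * D q k)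

variable {q : ℂ}

lemma D_ne (hq1 : ‖q‖ < 1) (k : ℕ) : D q k ≠ 0 :=
  Finset.prod_ne_zero_iff.mpr fun i _ => one_sub_mul_pow_ne hq1 i

lemma D_succ (k : ℕ) : D q (k + 1) = D q k * (1 - q * q ^ k) := Finset.prod_range_succ _ _

lemma gb_zero (hq1 : ‖q‖ < 1) (m : ℕ) : gb q m 0 = 1 := by
  simp [gb, D, div_self (D_ne hq1 m)]
  exact D_ne hq1 m

lemma gb_self (hq1 : ‖q‖ < 1) (m : ℕ) : gb q m m = 1 := by
  simp only [gb, Nat.sub_self]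
  rw [show D q 0 = 1 from rfl, one_mul, div_self (D_ne hq1 m)]

lemma e_succ (j : ℕ) : (j + 1) * j / 2 = j * (j - 1) / 2 + j := by
  rcases j with _ | s
  · rfl
  · rw [Nat.succ_sub_one,
      show (s + 1 + 1) * (s + 1) = (s + 1) * s + (s + 1) * 2 by ring,
      Nat.add_mul_div_right _ _ (by norm_num : (0:ℕ) < 2)]

lemma pascal (hq1 : ‖q‖ < 1) {j m : ℕ} (h : j < m) :
    gb q (m + 1) (j + 1) = gb q m (j + 1) + q ^ (m - j) * gb q m j := by
  have h1 : m + 1 - (j + 1) = (m - j - 1) + 1 := by omega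
  have h2 : m - (j + 1) = m - j - 1 := by omega
  have h3 : m - j = (m - j - 1) + 1 := by omega
  have hu : q * q ^ (m - j - 1) = q ^ (m - j) := by
    rw [← pow_succ']; congr 1; omega
  have hv : q * q ^ m = q ^ (m - j) * (q * q ^ j) := by
    rw [← pow_succ', ← pow_succ', ← pow_add]; congr 1; omega
  rw [gb, gb, gb, h1, h2, D_succ, D_succ, D_succ, h3, D_succ, hu, hv]
  have ha := D_ne hq1 (m - j - 1)
  have hb := D_ne hq1 j
  have hm := D_ne hq1 m
  have h1u : 1 - q ^ (m - j) ≠ 0 := by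
    have := one_sub_mul_pow_ne hq1 (m - j - 1); rwa [hu] at this
  have h1v : 1 - q * q ^ j ≠ 0 := one_sub_mul_pow_ne hq1 j
  set a := D q (m - j - 1)
  set b := D q j
  set A := D q m
  set u := q ^ (m - j)
  set v := q * q ^ j
  simp only [Nat.add_sub_cancel, ← h3, hu]
  rw [show D q (m - j - 1) = a from rfl, show q ^ (m - j) = u from rfl, mul_div_assoc']
  rw [div_add_div _ _ (mul_ne_zero ha (mul_ne_zero hb h1v))
      (mul_ne_zero (mul_ne_zero ha h1u) hb),
    div_eq_div_iff (mul_ne_zero (mul_ne_zero ha h1u) (mul_ne_zero hb h1v))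
      (mul_ne_zero (mul_ne_zero ha (mul_ne_zero hb h1v)) (mul_ne_zero (mul_ne_zero ha h1u) hb))]
  ring

lemma gauss (hq1 : ‖q‖ < 1) (m : ℕ) (t : ℂ) :
    ∏ j ∈ range m, (1 + t * q ^ j) =
      ∑ k ∈ range (m + 1), gb q m k * q ^ (k * (k - 1) / 2) * t ^ k := by
  induction m with
  | zero => simp [gb_zero hq1]
  | succ m ih =>
    rw [Finset.prod_range_succ, ih, mul_add, mul_one, Finset.sum_mul]
    conv_rhs => rw [Finset.sum_range_succ']
    conv_lhs => rw [Finset.sum_range_succ']   -- peels f 0 from first sum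
    -- peel top of the second LHS sum and top of RHS sum
    rw [Finset.sum_range_succ (fun k => gb q m k * q ^ (k * (k - 1) / 2) * t ^ k * (t * q ^ m))]
    rw [Finset.sum_range_succ (fun j => gb q (m+1) (j+1) * q ^ ((j+1) * (j+1-1) / 2) * t ^ (j+1))]
    have hc : gb q (m+1) (m+1) * q ^ ((m+1) * (m+1-1) / 2) * t ^ (m+1)
        = gb q m m * q ^ (m * (m - 1) / 2) * t ^ m * (t * q ^ m) := by
      rw [gb_self hq1, gb_self hq1, Nat.add_sub_cancel, e_succ]
      rw [pow_add, pow_succ]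
      ring
    have hA : ∑ j ∈ range m, gb q (m+1) (j+1) * q ^ ((j+1) * (j+1-1) / 2) * t ^ (j+1)
        = ∑ j ∈ range m, (gb q m (j+1) * q ^ ((j+1) * (j+1-1) / 2) * t ^ (j+1)
            + gb q m j * q ^ (j * (j - 1) / 2) * t ^ j * (t * q ^ m)) := by
      refine Finset.sum_congr rfl fun j hj => ?_
      rw [Finset.mem_range] at hj
      rw [pascal hq1 hj, Nat.add_sub_cancel, e_succ]
      have hq' : q ^ (m - j) * q ^ (j * (j - 1) / 2 + j) = q ^ (j * (j - 1) / 2) * q ^ m := by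
        rw [← pow_add, ← pow_add]
        congr 1
        have : j ≤ m := le_of_lt hj
        omega
      rw [pow_succ]  -- t^(j+1) = t^j * t
      calc (gb q m (j+1) + q ^ (m - j) * gb q m j) * q ^ (j*(j-1)/2 + j) * (t ^ j * t)
          = gb q m (j+1) * q ^ (j*(j-1)/2+j) * (t^j*t)
            + gb q m j * (q ^ (m-j) * q ^ (j*(j-1)/2+j)) * (t^j*t) := by ring
        _ = _ := by rw [hq']; ring
    rw [hA, Finset.sum_add_distrib, hc, gb_zero hq1, gb_zero hq1]
    ring

lemma D_tendsto (hq1 : ‖q‖ < 1) : Tendsto (D q) atTop (𝓝 (qpoch q q)) :=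
  (multipliable_one_sub hq1 q).hasProd.tendsto_prod_nat

lemma D_norm_le (hq1 : ‖q‖ < 1) (k : ℕ) : ‖D q k‖ ≤ Real.exp ((1 - ‖q‖)⁻¹) := by
  have h1 : ‖D q k‖ ≤ ∏ i ∈ range k, (1 + ‖q‖ * ‖q‖ ^ i) := by
    refine (Finset.norm_prod_le _ _).trans (Finset.prod_le_prod (fun i _ => norm_nonneg _)
      (fun i _ => ?_))
    calc ‖1 - q * q ^ i‖ ≤ ‖(1:ℂ)‖ + ‖q * q ^ i‖ := norm_sub_le _ _
      _ = 1 + ‖q‖ * ‖q‖ ^ i := by rw [norm_one, norm_mul, norm_pow]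
  refine h1.trans ?_
  have h2 : ∏ i ∈ range k, (1 + ‖q‖ * ‖q‖ ^ i) ≤ ∏ i ∈ range k, Real.exp (‖q‖ * ‖q‖ ^ i) :=
    Finset.prod_le_prod (fun i _ => by positivity) (fun i _ => by
      have := Real.add_one_le_exp (‖q‖ * ‖q‖ ^ i); linarith)
  refine h2.trans ?_
  rw [← Real.exp_sum]
  apply Real.exp_le_exp.mpr
  have h3 : ∑ i ∈ range k, ‖q‖ * ‖q‖ ^ i ≤ ∑ i ∈ range k, ‖q‖ ^ i :=
    Finset.sum_le_sum fun i _ => by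
      calc ‖q‖ * ‖q‖ ^ i ≤ 1 * ‖q‖ ^ i :=
        mul_le_mul_of_nonneg_right hq1.le (pow_nonneg (norm_nonneg q) i)
      _ = ‖q‖ ^ i := one_mul _
  refine h3.trans ?_
  have h4 := Summable.sum_le_tsum (range k) (fun i _ => pow_nonneg (norm_nonneg q) i)
    (summable_geometric_of_lt_one (norm_nonneg q) hq1)
  rwa [tsum_geometric_of_lt_one (norm_nonneg q) hq1] at h4

lemma exists_pos_le_of_tendsto {u : ℕ → ℝ} {L : ℝ} (hL : 0 < L) (hu : ∀ n, 0 < u n)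
    (h : Tendsto u atTop (𝓝 L)) : ∃ B > 0, ∀ n, B ≤ u n := by
  obtain ⟨K, hK⟩ := eventually_atTop.mp (h.eventually (eventually_gt_nhds (half_lt_self hL)))
  refine ⟨min (L / 2) ((Finset.range (K + 1)).inf' ⟨0, by simp⟩ u), lt_min (half_pos hL)
    ((Finset.lt_inf'_iff _).mpr fun i _ => hu i), fun n => ?_⟩
  rcases le_or_gt n K with h' | h'
  · exact (min_le_right _ _).trans (Finset.inf'_le _ (Finset.mem_range.mpr (by omega)))
  · exact (min_le_left _ _).trans (hK n h'.le).le

lemma D_lower (hq1 : ‖q‖ < 1) : ∃ B > 0, ∀ k, B ≤ ‖D q k‖ := by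
  have h1 : Tendsto (fun k => ‖D q k‖) atTop (𝓝 ‖qpoch q q‖) :=
    (continuous_norm.tendsto _).comp (D_tendsto hq1)
  exact exists_pos_le_of_tendsto (norm_pos_iff.mpr (qpoch_self_ne_zero hq1))
    (fun k => norm_pos_iff.mpr (D_ne hq1 k)) h1

lemma gb_bound (hq1 : ‖q‖ < 1) : ∃ C : ℝ, 0 ≤ C ∧ ∀ m k, ‖gb q m k‖ ≤ C := by
  obtain ⟨B, hB, hBle⟩ := D_lower hq1
  refine ⟨Real.exp ((1 - ‖q‖)⁻¹) / (B * B), by positivity, fun m k => ?_⟩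
  rw [gb, norm_div, norm_mul]
  exact div_le_div₀ (Real.exp_nonneg _) (D_norm_le hq1 m) (by positivity)
    (mul_le_mul (hBle _) (hBle _) hB.le (norm_nonneg _))

lemma quad_nat {Q : ℝ} (hQ0 : 0 ≤ Q) (hQ1 : Q < 1) {c : ℝ} (hc : 0 < c) (u : ℕ → ℕ)
    (hu : ∀ M : ℕ, ∀ᶠ n in atTop, M * n ≤ u n) :
    Summable (fun n : ℕ => Q ^ u n * c ^ n) := by
  obtain ⟨M, hM⟩ : ∃ M : ℕ, Q ^ M * c ≤ 1 / 2 := by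
    have h0 : Tendsto (fun M : ℕ => Q ^ M * c) atTop (𝓝 (0 * c)) :=
      (tendsto_pow_atTop_nhds_zero_of_lt_one hQ0 hQ1).mul_const c
    rw [zero_mul] at h0
    exact (h0.eventually_le_const (by norm_num : (0:ℝ) < 1/2)).exists
  apply summable_of_isBigO_nat (summable_geometric_of_lt_one (by norm_num : (0:ℝ) ≤ 1/2)
    (by norm_num : (1:ℝ)/2 < 1))
  rw [Asymptotics.isBigO_iff]
  refine ⟨1, ?_⟩
  filter_upwards [hu M] with n hn
  have h1 : Q ^ u n ≤ Q ^ (M * n) := pow_le_pow_of_le_one hQ0 hQ1.le hn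
  have h2 : Q ^ (M * n) * c ^ n = (Q ^ M * c) ^ n := by
    rw [mul_pow, pow_mul]
  have h3 : Q ^ u n * c ^ n ≤ (1 / 2) ^ n := by
    calc Q ^ u n * c ^ n ≤ Q ^ (M * n) * c ^ n :=
          mul_le_mul_of_nonneg_right h1 (pow_nonneg hc.le n)
      _ = (Q ^ M * c) ^ n := h2
      _ ≤ (1 / 2) ^ n := pow_le_pow_left₀ (by positivity) hM n
  rw [Real.norm_eq_abs, Real.norm_eq_abs, _root_.abs_of_nonneg (by positivity),
    _root_.abs_of_nonneg (by positivity : (0:ℝ) ≤ (1/2 : ℝ) ^ n), one_mul]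
  exact h3

lemma summable_bilateral {Q : ℝ} (hQ0 : 0 ≤ Q) (hQ1 : Q < 1) {R : ℝ} (hR : 0 < R) :
    Summable (fun n : ℤ => Q ^ (n * (n - 1) / 2).toNat * R ^ n) := by
  apply Summable.of_nat_of_neg
  · have h := quad_nat hQ0 hQ1 hR (fun n => (((n:ℤ) * ((n:ℤ) - 1)) / 2).toNat) ?_
    · refine h.congr fun n => ?_
      rw [zpow_natCast]
    · intro M
      filter_upwards [eventually_ge_atTop (2 * M + 1)] with n hn
      rw [Int.le_toNat]
      · push_cast
        rw [Int.le_ediv_iff_mul_le (by norm_num : (0:ℤ) < 2)]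
        have h1 : (2 * M : ℤ) ≤ (n : ℤ) - 1 := by omega
        calc (M : ℤ) * n * 2 = (n : ℤ) * (2 * M) := by ring
          _ ≤ (n : ℤ) * ((n:ℤ) - 1) := by
              exact mul_le_mul_of_nonneg_left h1 (by positivity)
      · apply Int.ediv_nonneg _ (by norm_num)
        have h1 : (1 : ℤ) ≤ (n : ℤ) := by omega
        nlinarith
  · have h := quad_nat hQ0 hQ1 (inv_pos.mpr hR) (fun n => ((-(n:ℤ)) * ((-(n:ℤ)) - 1) / 2).toNat) ?_
    · refine h.congr fun n => ?_
      rw [zpow_neg, zpow_natCast, inv_pow]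
    · intro M
      filter_upwards [eventually_ge_atTop (2 * M)] with n hn
      rw [Int.le_toNat]
      · rw [Int.le_ediv_iff_mul_le (by norm_num : (0:ℤ) < 2)]
        have h1 : (2 * M : ℤ) ≤ (n : ℤ) + 1 := by omega
        calc (M : ℤ) * n * 2 = (n : ℤ) * (2 * M) := by ring
          _ ≤ (n : ℤ) * ((n:ℤ) + 1) := mul_le_mul_of_nonneg_left h1 (by positivity)
          _ = (-(n:ℤ)) * ((-(n:ℤ)) - 1) := by ring
      · apply Int.ediv_nonneg _ (by norm_num)
        nlinarith [Int.natCast_nonneg n]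

lemma norm_term (q z : ℂ) (n : ℤ) :
    ‖q ^ (n * (n - 1) / 2).toNat * (-z) ^ n‖ = ‖q‖ ^ (n * (n - 1) / 2).toNat * ‖z‖ ^ n := by
  rw [norm_mul, norm_pow, norm_zpow, norm_neg]

lemma summable_norm_term {q z : ℂ} (hq1 : ‖q‖ < 1) (hz : z ≠ 0) :
    Summable (fun n : ℤ => ‖q ^ (n * (n - 1) / 2).toNat * (-z) ^ n‖) := by
  simp only [norm_term]
  exact summable_bilateral (norm_nonneg q) hq1 (norm_pos_iff.mpr hz)

lemma half_mul (n : ℤ) : 2 * (n * (n - 1) / 2) = n * (n - 1) := by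
  have h : (2 : ℤ) ∣ n * (n - 1) := by
    have h := Int.even_mul_succ_self (n - 1)
    rw [sub_add_cancel, mul_comm] at h
    exact h.two_dvd
  exact Int.mul_ediv_cancel' h

lemma cast_half (k : ℕ) : ((k * (k - 1) / 2 : ℕ) : ℤ) = (k : ℤ) * ((k : ℤ) - 1) / 2 := by
  rcases k with _ | s
  · rfl
  · have hd : 2 ∣ (s + 1) * s := by
      have h := Nat.even_mul_succ_self s
      rw [mul_comm] at h
      exact h.two_dvd
    apply mul_left_cancel₀ (by norm_num : (2:ℤ) ≠ 0)
    rw [half_mul, Nat.succ_sub_one]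
    calc (2:ℤ) * ↑((s+1) * s / 2) = ↑(2 * ((s+1) * s / 2)) := by push_cast; ring
      _ = ↑((s+1) * s) := by rw [Nat.mul_div_cancel' hd]
      _ = (↑(s+1) : ℤ) * (↑(s+1) - 1) := by push_cast; ring

lemma exp_id (N k : ℤ) :
    N * (N - 1) / 2 - N * N + (k - N) * (k - N - 1) / 2 = k * (k - 1) / 2 - N * k := by
  have hA := half_mul N
  have hB := half_mul k
  have hC := half_mul (k - N)
  nlinarith [hA, hB, hC]

lemma finiteJTP (hq1 : ‖q‖ < 1) (hq0 : q ≠ 0) (hz : z ≠ 0) (N : ℕ) :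
    ∏ j ∈ range N, ((1 - z * q ^ j) * (1 - (q * z⁻¹) * q ^ j)) =
      ∑ k ∈ range (2 * N + 1), gb q (2 * N) k *
        (q ^ (((k : ℤ) - N) * ((k : ℤ) - N - 1) / 2) * (-z) ^ ((k : ℤ) - (N : ℤ))) := by
  have hzn : (-z) ≠ 0 := neg_ne_zero.mpr hz
  have hqN : (q : ℂ) ^ N ≠ 0 := pow_ne_zero N hq0
  set t : ℂ := -(z * (q ^ N)⁻¹) with ht
  have G := gauss hq1 (2 * N) t
  set c : ℂ := (-z) ^ N * q ^ (N * (N - 1) / 2) * ((q ^ N) ^ N)⁻¹ with hc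
  have hcne : c ≠ 0 :=
    mul_ne_zero (mul_ne_zero (pow_ne_zero N hzn) (pow_ne_zero _ hq0))
      (inv_ne_zero (pow_ne_zero N hqN))
  have h1 : ∏ j ∈ range (2 * N), (1 + t * q ^ j)
      = c * ∏ j ∈ range N, ((1 - z * q ^ j) * (1 - (q * z⁻¹) * q ^ j)) := by
    rw [two_mul, Finset.prod_range_add]
    have hB : ∀ j ∈ range N, 1 + t * q ^ (N + j) = 1 - z * q ^ j := by
      intro j _
      have hinv : (q ^ N)⁻¹ * q ^ N = 1 := inv_mul_cancel₀ hqN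
      calc 1 + t * q ^ (N + j) = 1 - z * ((q ^ N)⁻¹ * q ^ N) * q ^ j := by
            rw [ht, pow_add]; ring
        _ = 1 - z * q ^ j := by rw [hinv]; ring
    have hA : ∀ j ∈ range N, 1 + t * q ^ j
        = ((-z) * (q ^ j * (q ^ N)⁻¹)) * (1 - (q * z⁻¹) * q ^ (N - 1 - j)) := by
      intro j hj
      rw [Finset.mem_range] at hj
      have hqq : q ^ j * (q * q ^ (N - 1 - j)) = q ^ N := by
        rw [← pow_succ', ← pow_add]; congr 1; omega
      have hzz : z * z⁻¹ = 1 := mul_inv_cancel₀ hz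
      have expand : ((-z) * (q ^ j * (q ^ N)⁻¹)) * (1 - (q * z⁻¹) * q ^ (N - 1 - j))
          = -(z * q ^ j * (q ^ N)⁻¹) + (z * z⁻¹) * ((q ^ j * (q * q ^ (N - 1 - j))) * (q ^ N)⁻¹) := by
        ring
      rw [expand, hzz, hqq, one_mul, mul_inv_cancel₀ hqN, ht]
      ring
    rw [Finset.prod_congr rfl hA, Finset.prod_congr rfl hB, Finset.prod_mul_distrib,
      Finset.prod_range_reflect (fun j => 1 - (q * z⁻¹) * q ^ j) N,
      Finset.prod_mul_distrib, Finset.prod_const, Finset.prod_mul_distrib,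
      Finset.prod_pow_eq_pow_sum, Finset.sum_range_id, Finset.prod_const, inv_pow, hc,
      Finset.prod_mul_distrib, Finset.card_range]
    ring
  apply mul_left_cancel₀ hcne
  rw [← h1, G, Finset.mul_sum]
  refine Finset.sum_congr rfl fun k hk => ?_
  rw [Finset.mem_range] at hk
  have htk : t ^ k = (-z) ^ k * ((q ^ N) ^ k)⁻¹ := by
    rw [show t = (-z) * (q ^ N)⁻¹ by rw [ht]; ring, mul_pow, inv_pow]
  have hzpart : (-z) ^ ((k : ℤ) - (N : ℤ)) = (-z) ^ k * ((-z) ^ N)⁻¹ := by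
    rw [zpow_sub₀ hzn, zpow_natCast, zpow_natCast, div_eq_mul_inv]
  have hqpart : q ^ (N * (N - 1) / 2) * ((q ^ N) ^ N)⁻¹
        * q ^ (((k : ℤ) - N) * ((k : ℤ) - N - 1) / 2)
      = q ^ (k * (k - 1) / 2) * ((q ^ N) ^ k)⁻¹ := by
    rw [← pow_mul, ← pow_mul, ← zpow_natCast q (N * (N - 1) / 2),
      ← zpow_natCast q (k * (k - 1) / 2), ← zpow_natCast q (N * N), ← zpow_natCast q (N * k),
      ← zpow_neg, ← zpow_neg, ← zpow_add₀ hq0, ← zpow_add₀ hq0, ← zpow_add₀ hq0]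
    congr 1
    rw [cast_half, cast_half]
    push_cast
    linear_combination exp_id (N : ℤ) (k : ℤ)
  calc gb q (2 * N) k * q ^ (k * (k - 1) / 2) * t ^ k
      = gb q (2 * N) k * (q ^ (k * (k - 1) / 2) * ((q ^ N) ^ k)⁻¹
          * ((-z) ^ N * ((-z) ^ N)⁻¹) * (-z) ^ k) := by
        rw [htk, mul_inv_cancel₀ (pow_ne_zero N hzn)]; ring
    _ = c * (gb q (2 * N) k * (q ^ (((k : ℤ) - N) * ((k : ℤ) - N - 1) / 2)
          * (-z) ^ ((k : ℤ) - (N : ℤ)))) := by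
        rw [hzpart, ← hqpart, hc]; ring

lemma half_nonneg (n : ℤ) : 0 ≤ n * (n - 1) / 2 := by
  apply Int.ediv_nonneg _ (by norm_num)
  rcases le_or_gt n 0 with h | h
  · nlinarith
  · nlinarith

lemma zpow_term (q : ℂ) (n : ℤ) : q ^ (n * (n - 1) / 2).toNat = q ^ (n * (n - 1) / 2) := by
  rw [← zpow_natCast, Int.toNat_of_nonneg (half_nonneg n)]

lemma main_identity (hq1 : ‖q‖ < 1) (hq0 : q ≠ 0) (hz : z ≠ 0) :
    qpoch z q * qpoch (q * z⁻¹) q =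
      (qpoch q q)⁻¹ * ∑' n : ℤ, q ^ (n * (n - 1) / 2).toNat * (-z) ^ n := by
  set P := qpoch q q with hP
  have hPne : P ≠ 0 := qpoch_self_ne_zero hq1
  set a : ℤ → ℂ := fun n => q ^ (n * (n - 1) / 2).toNat * (-z) ^ n with ha
  set g : ℕ → ℤ → ℂ :=
    fun N n => if n.natAbs ≤ N then gb q (2 * N) ((n + N).toNat) * a n else 0 with hg
  -- the finite sums
  have hfin : ∀ N : ℕ, (∑' n : ℤ, g N n) =
      ∏ j ∈ range N, ((1 - z * q ^ j) * (1 - (q * z⁻¹) * q ^ j)) := by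
    intro N
    rw [finiteJTP hq1 hq0 hz N]
    rw [tsum_eq_sum (s := Finset.Icc (-(N : ℤ)) N) (by
      intro n hn
      rw [Finset.mem_Icc] at hn
      rw [hg]
      simp only
      rw [if_neg (by omega)])]
    refine Finset.sum_nbij' (i := fun n => ((n : ℤ) + N).toNat)
      (j := fun k => (k : ℤ) - N) ?_ ?_ ?_ ?_ ?_
    · intro n hn
      simp only [Finset.mem_Icc] at hn
      simp only [Finset.mem_range]
      omega
    · intro k hk
      simp only [Finset.mem_range] at hk
      simp only [Finset.mem_Icc]
      omega
    · intro n hn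
      simp only [Finset.mem_Icc] at hn
      omega
    · intro k hk
      simp only [Finset.mem_range] at hk
      omega
    · intro n hn
      rw [Finset.mem_Icc] at hn
      rw [hg]
      simp only
      rw [if_pos (by omega)]
      have h1 : (((n + N).toNat : ℤ)) = n + N := Int.toNat_of_nonneg (by omega)
      rw [h1]
      have h2 : (n : ℤ) + N - N = n := by ring
      rw [h2, ha]
      simp only
      rw [zpow_term]
  -- domination
  obtain ⟨C, hC0, hCb⟩ := gb_bound hq1
  have hbd : ∀ N n, ‖g N n‖ ≤ C * ‖a n‖ := by
    intro N n
    rw [hg]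
    simp only
    split
    · rw [norm_mul]
      exact mul_le_mul_of_nonneg_right (hCb _ _) (norm_nonneg _)
    · rw [norm_zero]
      exact mul_nonneg hC0 (norm_nonneg _)
  -- pointwise limits
  have hpt : ∀ n : ℤ, Tendsto (fun N => g N n) atTop (𝓝 (P⁻¹ * a n)) := by
    intro n
    have hphi1 : Tendsto (fun N : ℕ => 2 * N) atTop atTop :=
      Filter.tendsto_atTop_atTop.mpr fun b => ⟨b, fun N hN => by omega⟩
    have hphi2 : Tendsto (fun N : ℕ => 2 * N - ((n : ℤ) + N).toNat) atTop atTop :=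
      Filter.tendsto_atTop_atTop.mpr fun b => ⟨b + n.natAbs, fun N hN => by omega⟩
    have hphi3 : Tendsto (fun N : ℕ => ((n : ℤ) + N).toNat) atTop atTop :=
      Filter.tendsto_atTop_atTop.mpr fun b => ⟨b + n.natAbs, fun N hN => by omega⟩
    have h1 : Tendsto (fun N => gb q (2 * N) ((n + N).toNat)) atTop (𝓝 (P / (P * P))) := by
      apply Tendsto.div
      · exact (D_tendsto hq1).comp hphi1
      · exact ((D_tendsto hq1).comp hphi2).mul ((D_tendsto hq1).comp hphi3)
      · exact mul_ne_zero hPne hPne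
    have h2 : P / (P * P) = P⁻¹ := by field_simp
    rw [h2] at h1
    have h3 : Tendsto (fun N => gb q (2 * N) ((n + N).toNat) * a n) atTop (𝓝 (P⁻¹ * a n)) :=
      h1.mul_const (a n)
    apply h3.congr'
    filter_upwards [eventually_ge_atTop n.natAbs] with N hN
    rw [hg]
    simp only
    rw [if_pos hN]
  -- Tannery
  have hsum : Summable (fun n : ℤ => C * ‖a n‖) := (summable_norm_term hq1 hz).mul_left C
  have key := tendsto_tsum_of_dominated_convergence hsum hpt
    (Eventually.of_forall fun N => hbd N)
  -- product side
  have hprod : Tendsto (fun N => ∏ j ∈ range N, ((1 - z * q ^ j) * (1 - (q * z⁻¹) * q ^ j)))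
      atTop (𝓝 (qpoch z q * qpoch (q * z⁻¹) q)) := by
    simp only [Finset.prod_mul_distrib]
    exact ((multipliable_one_sub hq1 z).hasProd.tendsto_prod_nat).mul
      ((multipliable_one_sub hq1 (q * z⁻¹)).hasProd.tendsto_prod_nat)
  have key2 : Tendsto (fun N => ∏ j ∈ range N, ((1 - z * q ^ j) * (1 - (q * z⁻¹) * q ^ j)))
      atTop (𝓝 (∑' n : ℤ, P⁻¹ * a n)) := key.congr (fun N => hfin N)
  have := tendsto_nhds_unique hprod key2
  rw [this, tsum_mul_left]

lemma toNat_half_pos {n : ℤ} (h0 : n ≠ 0) (h1 : n ≠ 1) : (n * (n - 1) / 2).toNat ≠ 0 := by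
  have h2 : 1 ≤ n * (n - 1) / 2 := by
    rw [Int.le_ediv_iff_mul_le (by norm_num : (0:ℤ) < 2)]
    rcases le_or_gt n 0 with h | h
    · have hn : n ≤ -1 := by omega
      nlinarith
    · have hn : 2 ≤ n := by omega
      nlinarith
  omega

end JTP

theorem jacobi_triple_product (p z : ℂ) (hp : ‖p‖ < 1) (hz : z ≠ 0) :
    Summable (fun n : ℤ => p ^ (n * (n - 1) / 2).toNat * (-z) ^ n) ∧
      qpoch z p * qpoch (p * z⁻¹) p =
        (qpoch p p)⁻¹ * ∑' n : ℤ, p ^ (n * (n - 1) / 2).toNat * (-z) ^ n := by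
  by_cases hp0 : p = 0
  · subst hp0
    have hsupp : ∀ n : ℤ, n ∉ ({0, 1} : Finset ℤ) →
        (0 : ℂ) ^ (n * (n - 1) / 2).toNat * (-z) ^ n = 0 := by
      intro n hn
      simp only [Finset.mem_insert, Finset.mem_singleton] at hn
      push_neg at hn
      rw [zero_pow (JTP.toNat_half_pos hn.1 hn.2), zero_mul]
    have hsummable : Summable (fun n : ℤ => (0:ℂ) ^ (n * (n - 1) / 2).toNat * (-z) ^ n) :=
      summable_of_ne_finset_zero hsupp
    refine ⟨hsummable, ?_⟩
    have htsum : (∑' n : ℤ, (0:ℂ) ^ (n * (n - 1) / 2).toNat * (-z) ^ n)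
        = ∑ n ∈ ({0, 1} : Finset ℤ), (0:ℂ) ^ (n * (n - 1) / 2).toNat * (-z) ^ n :=
      tsum_eq_sum hsupp
    have hq1 : qpoch z 0 = 1 - z := by
      rw [qpoch, tprod_eq_prod (s := {0}) (by
        intro j hj
        simp only [Finset.mem_singleton] at hj
        rw [zero_pow hj, mul_zero, sub_zero])]
      simp
    have hq2 : qpoch (0 * z⁻¹) 0 = 1 := by
      rw [zero_mul, qpoch]
      simp
    have hq3 : qpoch 0 0 = 1 := by
      rw [qpoch]
      simp
    rw [htsum, hq1, hq2, hq3, Finset.sum_pair (by norm_num : (0:ℤ) ≠ 1)]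
    norm_num
    ring
  · refine ⟨(JTP.summable_norm_term hp hz).of_norm, JTP.main_identity hp hp0 hz⟩
end

section
/- Let p, q be complex numbers with |p| < 1, |q| < 1 and let L be a nonnegative integer such that θ(q^{−j};p) ≠ 0 for all 1 ≤ j ≤ L. Then the function ε ↦ (1 − ε)·Γ(ε q^{−L};p,q) tends to 1/((p;p)_∞ (q;q)_∞ · ∏_{j=1}^{L} θ(q^{−j};p)) as ε tends to 1 (through values where Γ(ε q^{−L};p,q) is defined). -/
open Complex Real Filter Topology

namespace EGH


/-- Summability of logs of factors `1 - w i` given absolute summability of `w`. -/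
lemma summable_log {ι : Type*} {w : ι → ℂ} (hw : Summable fun i => ‖w i‖) :
    Summable fun i => Complex.log (1 - w i) := by
  apply Summable.of_norm_bounded_eventually (g := fun i => (3/2) * ‖w i‖) (hw.mul_left _)
  have h2 : ∀ᶠ i in cofinite, ‖w i‖ < 1/2 :=
    hw.tendsto_cofinite_zero.eventually_lt_const (by norm_num)
  filter_upwards [h2] with i hi
  have : (1 : ℂ) - w i = 1 + (-w i) := by ring
  rw [this]
  simpa using Complex.norm_log_one_add_half_le_self (z := -w i) (by simpa using hi.le)

lemma hasProd_one_sub {ι : Type*} {w : ι → ℂ} (hw : Summable fun i => ‖w i‖)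
    (h0 : ∀ i, 1 - w i ≠ 0) :
    HasProd (fun i => 1 - w i) (Complex.exp (∑' i, Complex.log (1 - w i))) := by
  have h : (fun i => Complex.exp (Complex.log (1 - w i))) = fun i => 1 - w i :=
    funext fun i => Complex.exp_log (h0 i)
  exact h ▸ (summable_log hw).hasSum.cexp

lemma tprod_one_sub {ι : Type*} {w : ι → ℂ} (hw : Summable fun i => ‖w i‖)
    (h0 : ∀ i, 1 - w i ≠ 0) :
    (∏' i, (1 - w i)) = Complex.exp (∑' i, Complex.log (1 - w i)) :=
  (hasProd_one_sub hw h0).tprod_eq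

lemma summable_geom_norm {t : ℂ} (c : ℂ) (ht : ‖t‖ < 1) :
    Summable fun j : ℕ => ‖c * t ^ j‖ := by
  simpa [norm_mul, norm_pow] using (summable_geometric_of_lt_one (norm_nonneg t) ht).mul_left ‖c‖

lemma summable_geom_norm2 {p q : ℂ} (c : ℂ) (hp : ‖p‖ < 1) (hq : ‖q‖ < 1) :
    Summable fun jk : ℕ × ℕ => ‖c * p ^ jk.1 * q ^ jk.2‖ := by
  have h := ((summable_geometric_of_lt_one (norm_nonneg p) hp).mul_of_nonneg
      (summable_geometric_of_lt_one (norm_nonneg q) hq)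
      (fun i => pow_nonneg (norm_nonneg p) i) (fun i => pow_nonneg (norm_nonneg q) i)).mul_left ‖c‖
  apply h.congr
  intro jk
  simp [norm_mul, norm_pow]
  ring

variable {p q : ℂ}

lemma summable_log_geom {t : ℂ} (c : ℂ) (ht : ‖t‖ < 1) :
    Summable fun j : ℕ => Complex.log (1 - c * t ^ j) :=
  summable_log (summable_geom_norm c ht)

lemma summable_log_geom2 (c : ℂ) (hp : ‖p‖ < 1) (hq : ‖q‖ < 1) :
    Summable fun jk : ℕ × ℕ => Complex.log (1 - c * p ^ jk.1 * q ^ jk.2) :=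
  summable_log (summable_geom_norm2 c hp hq)

lemma sum_range_eq_sum_Icc {M : Type*} [AddCommMonoid M] (f : ℕ → M) (L : ℕ) :
    ∑ i ∈ Finset.range L, f (i + 1) = ∑ m ∈ Finset.Icc 1 L, f m := by
  refine Finset.sum_nbij' (i := fun i => i + 1) (j := fun m => m - 1) ?_ ?_ ?_ ?_ ?_ <;>
    simp only [Finset.mem_range, Finset.mem_Icc]
  all_goals intros; first | trivial | omega


lemma key_sum (hp : ‖p‖ < 1) (hq : ‖q‖ < 1) (hq0 : q ≠ 0) (L : ℕ) :
    (∑' jk : ℕ × ℕ, Complex.log (1 - q ^ L * p ^ (jk.1 + 1) * q ^ (jk.2 + 1)))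
      - ∑' jk : ℕ × ℕ, Complex.log (1 - (q ^ L)⁻¹ * p ^ jk.1 * q ^ jk.2)
    = -((∑' j : ℕ, Complex.log (1 - p * p ^ j)) + (∑' j : ℕ, Complex.log (1 - q * q ^ j))
        + ∑ m ∈ Finset.Icc 1 L, ((∑' j : ℕ, Complex.log (1 - (q ^ m)⁻¹ * p ^ j))
            + ∑' j : ℕ, Complex.log (1 - p * q ^ m * p ^ j))) := by
  have hqL : (q : ℂ) ^ L ≠ 0 := pow_ne_zero _ hq0
  -- summabilities
  have hN2 : Summable (fun jk : ℕ × ℕ =>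
      Complex.log (1 - q ^ L * p ^ (jk.1 + 1) * q ^ (jk.2 + 1))) := by
    refine (summable_log_geom2 (q ^ L * (p * q)) hp hq).congr fun jk => ?_
    congr 1; ring
  have hD2 : Summable (fun jk : ℕ × ℕ =>
      Complex.log (1 - (q ^ L)⁻¹ * p ^ jk.1 * q ^ jk.2)) :=
    summable_log_geom2 _ hp hq
  -- iterated sums
  have e1 : (∑' jk : ℕ × ℕ, Complex.log (1 - q ^ L * p ^ (jk.1 + 1) * q ^ (jk.2 + 1)))
      = ∑' j : ℕ, ∑' k : ℕ, Complex.log (1 - q ^ L * p ^ (j + 1) * q ^ (k + 1)) :=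
    Summable.tsum_prod' hN2 fun j => hN2.prod_factor j
  have e2 : (∑' jk : ℕ × ℕ, Complex.log (1 - (q ^ L)⁻¹ * p ^ jk.1 * q ^ jk.2))
      = ∑' j : ℕ, ∑' k : ℕ, Complex.log (1 - (q ^ L)⁻¹ * p ^ j * q ^ k) :=
    Summable.tsum_prod' hD2 fun j => hD2.prod_factor j
  -- the V 0 computation
  have hV0 : (∑' k : ℕ, Complex.log (1 - (q ^ L)⁻¹ * p ^ 0 * q ^ k))
      = (∑ m ∈ Finset.Icc 1 L, Complex.log (1 - (q ^ m)⁻¹))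
        + ∑' k : ℕ, Complex.log (1 - q * q ^ k) := by
    have h0 : (∑' k : ℕ, Complex.log (1 - (q ^ L)⁻¹ * p ^ 0 * q ^ k))
        = ∑' k : ℕ, Complex.log (1 - (q ^ L)⁻¹ * q ^ k) :=
      tsum_congr fun k => by norm_num
    have hs : Summable (fun k : ℕ => Complex.log (1 - (q ^ L)⁻¹ * q ^ k)) :=
      summable_log_geom _ hq
    rw [h0, ← Summable.sum_add_tsum_nat_add (L + 1) hs]
    congr 1
    · rw [Finset.sum_range_succ, inv_mul_cancel₀ hqL, sub_self, Complex.log_zero, add_zero,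
        ← sum_range_eq_sum_Icc (f := fun m => Complex.log (1 - (q ^ m)⁻¹)) L,
        ← Finset.sum_range_reflect]
      apply Finset.sum_congr rfl
      intro i hi
      rw [Finset.mem_range] at hi
      congr 1
      have hsplit : q ^ L = q ^ (i + 1) * q ^ (L - 1 - i) := by
        rw [← pow_add]; congr 1; omega
      rw [hsplit, mul_inv, mul_assoc, inv_mul_cancel₀ (pow_ne_zero _ hq0), mul_one]
    · refine tsum_congr fun i => ?_
      congr 1
      have : q ^ (i + (L + 1)) = q ^ L * (q * q ^ i) := by rw [pow_add]; ring
      rw [this, ← mul_assoc, inv_mul_cancel₀ hqL, one_mul]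
  -- the W decomposition
  have hW : ∀ j : ℕ, (∑' k : ℕ, Complex.log (1 - p * p ^ j * (q * q ^ k)))
      = (∑ m ∈ Finset.Icc 1 L, Complex.log (1 - p * q ^ m * p ^ j))
        + ∑' k : ℕ, Complex.log (1 - q ^ L * p ^ (j + 1) * q ^ (k + 1)) := by
    intro j
    have hs : Summable (fun k : ℕ => Complex.log (1 - p * p ^ j * q * q ^ k)) :=
      summable_log_geom _ hq
    have h0 : (∑' k : ℕ, Complex.log (1 - p * p ^ j * (q * q ^ k)))
        = ∑' k : ℕ, Complex.log (1 - p * p ^ j * q * q ^ k) :=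
      tsum_congr fun k => by congr 1; ring
    rw [h0, ← Summable.sum_add_tsum_nat_add L hs]
    congr 1
    · rw [← sum_range_eq_sum_Icc (f := fun m => Complex.log (1 - p * q ^ m * p ^ j)) L]
      exact Finset.sum_congr rfl fun i _ => by congr 1; ring
    · exact tsum_congr fun i => by congr 1; ring
  -- the V (j+1) decomposition
  have hVs : ∀ j : ℕ, (∑' k : ℕ, Complex.log (1 - (q ^ L)⁻¹ * p ^ (j + 1) * q ^ k))
      = (∑ m ∈ Finset.Icc 1 L, Complex.log (1 - (q ^ m)⁻¹ * p ^ (j + 1)))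
        + Complex.log (1 - p * p ^ j)
        + ∑' k : ℕ, Complex.log (1 - p * p ^ j * (q * q ^ k)) := by
    intro j
    have hs : Summable (fun k : ℕ => Complex.log (1 - (q ^ L)⁻¹ * p ^ (j + 1) * q ^ k)) := by
      refine (summable_log_geom ((q ^ L)⁻¹ * p ^ (j + 1)) hq).congr fun k => rfl
    rw [← Summable.sum_add_tsum_nat_add (L + 1) hs, Finset.sum_range_succ]
    congr 1
    · congr 1
      · rw [← sum_range_eq_sum_Icc (f := fun m => Complex.log (1 - (q ^ m)⁻¹ * p ^ (j + 1))) L,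
          ← Finset.sum_range_reflect]
        apply Finset.sum_congr rfl
        intro i hi
        rw [Finset.mem_range] at hi
        congr 1
        have hsplit : q ^ L = q ^ (i + 1) * q ^ (L - 1 - i) := by
          rw [← pow_add]; congr 1; omega
        rw [hsplit]
        field_simp
      · congr 1
        have : (q ^ L)⁻¹ * p ^ (j + 1) * q ^ L = p ^ (j + 1) := by
          field_simp
        rw [this, pow_succ]
        ring
    · refine tsum_congr fun i => ?_
      congr 1
      have : q ^ (i + (L + 1)) = q ^ L * (q * q ^ i) := by rw [pow_add]; ring
      rw [this]
      field_simp
      ring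

  -- summability of the fiber sums
  have hUsum : Summable (fun j : ℕ => ∑' k : ℕ,
      Complex.log (1 - q ^ L * p ^ (j + 1) * q ^ (k + 1))) := hN2.prod
  have hVsum : Summable (fun j : ℕ => ∑' k : ℕ,
      Complex.log (1 - (q ^ L)⁻¹ * p ^ j * q ^ k)) := hD2.prod
  have hVs1 : Summable (fun j : ℕ => ∑' k : ℕ,
      Complex.log (1 - (q ^ L)⁻¹ * p ^ (j + 1) * q ^ k)) :=
    (summable_nat_add_iff (f := fun j : ℕ => ∑' k : ℕ,
      Complex.log (1 - (q ^ L)⁻¹ * p ^ j * q ^ k)) 1).2 hVsum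
  have hPsum : Summable (fun j : ℕ => Complex.log (1 - p * p ^ j)) := summable_log_geom p hp
  have hSm : ∀ m : ℕ, Summable (fun j : ℕ => Complex.log (1 - (q ^ m)⁻¹ * p ^ (j + 1))) := by
    intro m
    refine (summable_log_geom ((q ^ m)⁻¹ * p) hp).congr fun j => ?_
    congr 2; ring
  have hTm : ∀ m : ℕ, Summable (fun j : ℕ => Complex.log (1 - p * q ^ m * p ^ j)) :=
    fun m => summable_log_geom _ hp
  have hst : ∀ m : ℕ, Summable (fun j : ℕ => Complex.log (1 - (q ^ m)⁻¹ * p ^ (j + 1))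
      + Complex.log (1 - p * q ^ m * p ^ j)) := fun m => (hSm m).add (hTm m)
  -- the pointwise identity
  have hptw : ∀ j : ℕ, (∑' k : ℕ, Complex.log (1 - q ^ L * p ^ (j + 1) * q ^ (k + 1)))
      - (∑' k : ℕ, Complex.log (1 - (q ^ L)⁻¹ * p ^ (j + 1) * q ^ k))
      = -(Complex.log (1 - p * p ^ j) + ∑ m ∈ Finset.Icc 1 L,
          (Complex.log (1 - (q ^ m)⁻¹ * p ^ (j + 1)) + Complex.log (1 - p * q ^ m * p ^ j))) := by
    intro j
    have h1 := hW j
    have h2 := hVs j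
    rw [Finset.sum_add_distrib]
    linear_combination -h2 - h1
  have hinner : Summable (fun j : ℕ => ∑ m ∈ Finset.Icc 1 L,
      (Complex.log (1 - (q ^ m)⁻¹ * p ^ (j + 1)) + Complex.log (1 - p * q ^ m * p ^ j))) := by
    refine ((hUsum.sub hVs1).neg.sub hPsum).congr fun j => ?_
    rw [hptw j]; ring
  -- assemble
  have hA : (∑' j : ℕ, ((∑' k : ℕ, Complex.log (1 - q ^ L * p ^ (j + 1) * q ^ (k + 1)))
        - ∑' k : ℕ, Complex.log (1 - (q ^ L)⁻¹ * p ^ (j + 1) * q ^ k)))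
      = -((∑' j : ℕ, Complex.log (1 - p * p ^ j)) + ∑ m ∈ Finset.Icc 1 L,
          ((∑' j : ℕ, Complex.log (1 - (q ^ m)⁻¹ * p ^ (j + 1)))
            + ∑' j : ℕ, Complex.log (1 - p * q ^ m * p ^ j))) := by
    rw [tsum_congr hptw, tsum_neg, Summable.tsum_add hPsum hinner, Summable.tsum_finsetSum (fun m _ => hst m)]
    congr 2
    exact Finset.sum_congr rfl fun m _ => Summable.tsum_add (hSm m) (hTm m)
  have hTh1 : ∀ m : ℕ, (∑' j : ℕ, Complex.log (1 - (q ^ m)⁻¹ * p ^ j))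
      = Complex.log (1 - (q ^ m)⁻¹)
        + ∑' j : ℕ, Complex.log (1 - (q ^ m)⁻¹ * p ^ (j + 1)) := by
    intro m
    rw [Summable.tsum_eq_zero_add (summable_log_geom _ hp)]
    congr 2
    norm_num
  rw [e1, e2, Summable.tsum_eq_zero_add hVsum, hV0]
  have hsub := Summable.tsum_sub hUsum hVs1
  have hfin : ∑ m ∈ Finset.Icc 1 L, ((∑' j : ℕ, Complex.log (1 - (q ^ m)⁻¹ * p ^ j))
      + ∑' j : ℕ, Complex.log (1 - p * q ^ m * p ^ j))
      = ∑ m ∈ Finset.Icc 1 L, Complex.log (1 - (q ^ m)⁻¹)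
        + (∑ m ∈ Finset.Icc 1 L, ((∑' j : ℕ, Complex.log (1 - (q ^ m)⁻¹ * p ^ (j + 1)))
            + ∑' j : ℕ, Complex.log (1 - p * q ^ m * p ^ j))) := by
    rw [← Finset.sum_add_distrib]
    exact Finset.sum_congr rfl fun m _ => by rw [hTh1 m]; ring
  linear_combination -hsub + hA + hfin




lemma tprod_eq_zero {ι : Type*} (f : ι → ℂ) (i₀ : ι) (h : f i₀ = 0) : ∏' i, f i = 0 := by
  have hP : HasProd f 0 := by
    refine (tendsto_const_nhds (x := (0:ℂ))).congr' ?_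
    filter_upwards [Filter.eventually_ge_atTop ({i₀} : Finset ι)] with s hs
    exact (Finset.prod_eq_zero (hs (Finset.mem_singleton_self i₀)) h).symm
  exact hP.tprod_eq

lemma ne_zero_of_norm_lt_one {w : ℂ} (h : ‖w‖ < 1) : 1 - w ≠ 0 := by
  intro h0
  rw [sub_eq_zero] at h0
  rw [← h0] at h
  simp at h

lemma helper_lt1 {a b c : ℝ} (ha0 : 0 ≤ a) (hb0 : 0 ≤ b) (hc0 : 0 ≤ c)
    (ha : a < 1) (hb : b ≤ 1) (hc : c ≤ 1) : a * b * c < 1 :=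
  lt_of_le_of_lt (le_trans (mul_le_of_le_one_right (mul_nonneg ha0 hb0) hc)
    (mul_le_of_le_one_right ha0 hb)) ha


lemma qpoch_factor_ne_zero {z t : ℂ} (h : qpoch z t ≠ 0) (j : ℕ) : 1 - z * t ^ j ≠ 0 :=
  fun h0 => h (by rw [qpoch]; exact tprod_eq_zero _ j h0)

section Main

variable {p q : ℂ} {L : ℕ}

lemma norm_fac2 (hp : ‖p‖ < 1) (hq : ‖q‖ < 1) (m j : ℕ) : ‖p * q ^ m * p ^ j‖ < 1 := by
  rw [norm_mul, norm_mul, norm_pow, norm_pow]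
  exact helper_lt1 (norm_nonneg p) (pow_nonneg (norm_nonneg q) m) (pow_nonneg (norm_nonneg p) j)
    hp (pow_le_one₀ (norm_nonneg q) hq.le) (pow_le_one₀ (norm_nonneg p) hp.le)

lemma norm_facN (hp : ‖p‖ < 1) (hq : ‖q‖ < 1) (L : ℕ) (j k : ℕ) :
    ‖q ^ L * p ^ (j + 1) * q ^ (k + 1)‖ < 1 := by
  rw [norm_mul, norm_mul, norm_pow, norm_pow, norm_pow]
  rw [show ‖q‖ ^ L * ‖p‖ ^ (j + 1) * ‖q‖ ^ (k + 1)
      = ‖p‖ ^ (j + 1) * ‖q‖ ^ L * ‖q‖ ^ (k + 1) from by ring]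
  refine helper_lt1 (pow_nonneg (norm_nonneg p) _) (pow_nonneg (norm_nonneg q) _)
    (pow_nonneg (norm_nonneg q) _) ?_ (pow_le_one₀ (norm_nonneg q) hq.le)
    (pow_le_one₀ (norm_nonneg q) hq.le)
  exact pow_lt_one₀ (norm_nonneg p) hp (Nat.succ_ne_zero j)

lemma norm_fac1 (hp : ‖p‖ < 1) (j : ℕ) : ‖p * p ^ j‖ < 1 := by
  have := norm_fac2 hp hp 0 j
  simpa using this

/-- The representation of the limit RHS as an exponential. -/
lemma rhs_eq (hp : ‖p‖ < 1) (hq : ‖q‖ < 1) (hq0 : q ≠ 0)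
    (hθ : ∀ j ∈ Finset.Icc 1 L, theta p (q ^ (-(j : ℤ))) ≠ 0) :
    (qpoch p p * qpoch q q * ∏ j ∈ Finset.Icc 1 L, theta p (q ^ (-(j : ℤ))))⁻¹
      = Complex.exp (-((∑' j : ℕ, Complex.log (1 - p * p ^ j))
          + (∑' j : ℕ, Complex.log (1 - q * q ^ j))
          + ∑ m ∈ Finset.Icc 1 L, ((∑' j : ℕ, Complex.log (1 - (q ^ m)⁻¹ * p ^ j))
              + ∑' j : ℕ, Complex.log (1 - p * q ^ m * p ^ j)))) := by
  have hzpow : ∀ m : ℕ, (q ^ (-(m : ℤ)) : ℂ) = (q ^ m)⁻¹ := fun m => by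
    rw [zpow_neg, zpow_natCast]
  have hth : ∀ m ∈ Finset.Icc 1 L, theta p (q ^ (-(m : ℤ)))
      = Complex.exp ((∑' j : ℕ, Complex.log (1 - (q ^ m)⁻¹ * p ^ j))
          + ∑' j : ℕ, Complex.log (1 - p * q ^ m * p ^ j)) := by
    intro m hm
    have h := hθ m hm
    rw [theta, hzpow m, inv_inv] at h ⊢
    have h1 : qpoch ((q ^ m)⁻¹) p ≠ 0 := left_ne_zero_of_mul h
    have e1 : qpoch ((q ^ m)⁻¹) p
        = Complex.exp (∑' j : ℕ, Complex.log (1 - (q ^ m)⁻¹ * p ^ j)) := by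
      rw [qpoch]
      exact tprod_one_sub (summable_geom_norm _ hp) (qpoch_factor_ne_zero h1)
    have e2 : qpoch (p * q ^ m) p
        = Complex.exp (∑' j : ℕ, Complex.log (1 - p * q ^ m * p ^ j)) := by
      rw [qpoch]
      exact tprod_one_sub (summable_geom_norm _ hp)
        (fun j => ne_zero_of_norm_lt_one (norm_fac2 hp hq m j))
    rw [e1, e2, ← Complex.exp_add]
  have eP : qpoch p p = Complex.exp (∑' j : ℕ, Complex.log (1 - p * p ^ j)) := by
    rw [qpoch]
    exact tprod_one_sub (summable_geom_norm _ hp)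
      (fun j => ne_zero_of_norm_lt_one (norm_fac1 hp j))
  have eQ : qpoch q q = Complex.exp (∑' j : ℕ, Complex.log (1 - q * q ^ j)) := by
    rw [qpoch]
    exact tprod_one_sub (summable_geom_norm _ hq)
      (fun j => ne_zero_of_norm_lt_one (norm_fac1 hq j))
  rw [Finset.prod_congr rfl hth, ← Complex.exp_sum, eP, eQ, ← Complex.exp_add, ← Complex.exp_add,
    ← Complex.exp_neg]

lemma den1_ne_zero (hp : ‖p‖ < 1) (hq : ‖q‖ < 1) (hq0 : q ≠ 0)
    (hθ : ∀ j ∈ Finset.Icc 1 L, theta p (q ^ (-(j : ℤ))) ≠ 0)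
    (j k : ℕ) (hne : (j, k) ≠ ((0 : ℕ), L)) : 1 - (q ^ L)⁻¹ * p ^ j * q ^ k ≠ 0 := by
  have hθ' : ∀ m ∈ Finset.Icc 1 L, ∀ i : ℕ, 1 - (q ^ m)⁻¹ * p ^ i ≠ 0 := by
    intro m hm i
    have h := hθ m hm
    rw [theta] at h
    have h1 : qpoch (q ^ (-(m : ℤ))) p ≠ 0 := left_ne_zero_of_mul h
    have h2 := qpoch_factor_ne_zero h1 i
    rwa [zpow_neg, zpow_natCast] at h2
  rcases lt_trichotomy k L with hk | hk | hk
  · have e : (q ^ L)⁻¹ * p ^ j * q ^ k = (q ^ (L - k))⁻¹ * p ^ j := by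
      have hsplit : q ^ L = q ^ (L - k) * q ^ k := by rw [← pow_add]; congr 1; omega
      rw [hsplit]
      field_simp
    rw [e]
    exact hθ' (L - k) (by simp only [Finset.mem_Icc]; omega) j
  · subst hk
    have hj : j ≠ 0 := by rintro rfl; exact hne rfl
    obtain ⟨j', rfl⟩ := Nat.exists_eq_succ_of_ne_zero hj
    have e : (q ^ k)⁻¹ * p ^ (j' + 1) * q ^ k = p * p ^ j' := by
      field_simp
      ring
    rw [e]
    exact ne_zero_of_norm_lt_one (norm_fac1 hp j')
  · obtain ⟨n, rfl⟩ := Nat.exists_eq_add_of_lt hk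
    have e : (q ^ L)⁻¹ * p ^ j * q ^ (L + n + 1) = q * p ^ j * q ^ n := by
      rw [pow_add, pow_add, pow_one]
      field_simp
    rw [e]
    apply ne_zero_of_norm_lt_one
    rw [norm_mul, norm_mul, norm_pow, norm_pow]
    exact helper_lt1 (norm_nonneg q) (pow_nonneg (norm_nonneg p) j)
      (pow_nonneg (norm_nonneg q) _) hq (pow_le_one₀ (norm_nonneg p) hp.le)
      (pow_le_one₀ (norm_nonneg q) hq.le)

end Main

end EGH

open EGH

theorem egamma_pinching_limit (p q : ℂ) (hp : ‖p‖ < 1) (hq : ‖q‖ < 1) (hq0 : q ≠ 0)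
    (L : ℕ) (hθ : ∀ j ∈ Finset.Icc 1 L, theta p (q ^ (-(j : ℤ))) ≠ 0) :
    Tendsto (fun ε : ℂ => (1 - ε) * egamma (ε * q ^ (-(L : ℤ))) p q)
      (𝓝[{ε : ℂ | ∀ j k : ℕ, ε * q ^ (-(L : ℤ)) * p ^ j * q ^ k ≠ 1}] 1)
      (𝓝 ((qpoch p p * qpoch q q * ∏ j ∈ Finset.Icc 1 L, theta p (q ^ (-(j : ℤ))))⁻¹)) := by
  classical
  have hqL : (q : ℂ) ^ L ≠ 0 := pow_ne_zero _ hq0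
  have hzL : (q ^ (-(L : ℤ)) : ℂ) = (q ^ L)⁻¹ := by rw [zpow_neg, zpow_natCast]
  -- constants
  set ρ : ℝ := max ‖p‖ ‖q‖ with hρdef
  have hρ0 : 0 ≤ ρ := le_trans (norm_nonneg p) (le_max_left _ _)
  have hρ1 : ρ < 1 := max_lt hp hq
  have hpρ : ‖p‖ ≤ ρ := le_max_left _ _
  have hqρ : ‖q‖ ≤ ρ := le_max_right _ _
  set C : ℝ := 2 * ‖q‖ ^ L + 2 * ‖(q ^ L)⁻¹‖ + 1 with hCdef
  have hC0 : 0 < C := by positivity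
  obtain ⟨M0, hM0⟩ := exists_pow_lt_of_lt_one (show (0 : ℝ) < 1 / (2 * C) by positivity) hρ1
  set M : ℕ := max M0 (L + 1) with hMdef
  have hCM : C * ρ ^ M ≤ 1 / 2 := by
    have h1 : ρ ^ M ≤ ρ ^ M0 := pow_le_pow_of_le_one hρ0 hρ1.le (le_max_left _ _)
    have h2 : ρ ^ M0 ≤ 1 / (2 * C) := hM0.le
    calc C * ρ ^ M ≤ C * (1 / (2 * C)) :=
          mul_le_mul_of_nonneg_left (h1.trans h2) hC0.le
      _ = 1 / 2 := by field_simp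
  set T : Finset (ℕ × ℕ) := Finset.range M ×ˢ Finset.range M with hTdef
  have hML : L + 1 ≤ M := le_max_right _ _
  have h0L : ((0 : ℕ), L) ∈ T := by
    rw [hTdef, Finset.mem_product]
    constructor <;> rw [Finset.mem_range] <;> omega
  -- functions
  set wN : ℂ → ℕ × ℕ → ℂ := fun ε jk => (ε * (q ^ L)⁻¹)⁻¹ * p ^ (jk.1 + 1) * q ^ (jk.2 + 1)
    with hwNdef
  set wD : ℂ → ℕ × ℕ → ℂ := fun ε jk => ε * (q ^ L)⁻¹ * p ^ jk.1 * q ^ jk.2 with hwDdef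
  set B : Set ℂ := Metric.ball (1 : ℂ) (1 / 2) with hBdef
  have hBmem : (1 : ℂ) ∈ B := Metric.mem_ball_self (by norm_num)
  have hBnhds : B ∈ 𝓝 (1 : ℂ) := Metric.isOpen_ball.mem_nhds hBmem
  have hBn : ∀ ε ∈ B, 1 / 2 < ‖ε‖ ∧ ‖ε‖ < 3 / 2 := by
    intro ε hε
    rw [hBdef, Metric.mem_ball, dist_eq_norm] at hε
    have h1 := abs_norm_sub_norm_le ε (1 : ℂ)
    rw [norm_one] at h1
    rcases abs_le.1 h1 with ⟨h2, h3⟩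
    constructor <;> linarith
  have hB0 : ∀ ε ∈ B, ε ≠ 0 := by
    intro ε hε h0
    have := (hBn ε hε).1
    rw [h0, norm_zero] at this
    linarith
  have hBinv : ∀ ε ∈ B, ‖ε⁻¹‖ ≤ 2 := by
    intro ε hε
    have h := (hBn ε hε).1
    have h2 : (0 : ℝ) < ‖ε‖ := by linarith
    rw [norm_inv, inv_eq_one_div, div_le_iff₀ h2]
    linarith
  -- uniform bounds
  have hbN : ∀ ε ∈ B, ∀ jk : ℕ × ℕ, ‖wN ε jk‖ ≤ C * ρ ^ (jk.1 + jk.2) := by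
    intro ε hε jk
    have e : ‖wN ε jk‖ = ‖ε⁻¹‖ * (‖q‖ ^ L * (‖p‖ ^ (jk.1 + 1) * ‖q‖ ^ (jk.2 + 1))) := by
      simp only [hwNdef, mul_inv, inv_inv, norm_mul, norm_inv, norm_pow]
      ring
    have h1 : ‖p‖ ^ (jk.1 + 1) ≤ ρ ^ (jk.1 + 1) := pow_le_pow_left₀ (norm_nonneg p) hpρ _
    have h2 : ‖q‖ ^ (jk.2 + 1) ≤ ρ ^ (jk.2 + 1) := pow_le_pow_left₀ (norm_nonneg q) hqρ _
    have h3 : ρ ^ (jk.1 + 1) * ρ ^ (jk.2 + 1) ≤ ρ ^ (jk.1 + jk.2) := by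
      rw [← pow_add]
      exact pow_le_pow_of_le_one hρ0 hρ1.le (by omega)
    have h4 : ‖q‖ ^ L ≤ C / 2 := by
      have hh := norm_nonneg ((q ^ L : ℂ)⁻¹)
      rw [hCdef]; linarith
    have h5 : ‖p‖ ^ (jk.1 + 1) * ‖q‖ ^ (jk.2 + 1) ≤ ρ ^ (jk.1 + jk.2) :=
      le_trans (mul_le_mul h1 h2 (by positivity) (by positivity)) h3
    rw [e]
    calc ‖ε⁻¹‖ * (‖q‖ ^ L * (‖p‖ ^ (jk.1 + 1) * ‖q‖ ^ (jk.2 + 1)))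
        ≤ 2 * (C / 2 * ρ ^ (jk.1 + jk.2)) := by
          apply mul_le_mul (hBinv ε hε) ?_ (by positivity) (by norm_num)
          exact mul_le_mul h4 h5 (by positivity) (div_nonneg hC0.le (by norm_num))
      _ = C * ρ ^ (jk.1 + jk.2) := by ring
  have hbD : ∀ ε ∈ B, ∀ jk : ℕ × ℕ, ‖wD ε jk‖ ≤ C * ρ ^ (jk.1 + jk.2) := by
    intro ε hε jk
    have e : ‖wD ε jk‖ = ‖ε‖ * (‖(q ^ L)⁻¹‖ * (‖p‖ ^ jk.1 * ‖q‖ ^ jk.2)) := by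
      simp only [hwDdef, norm_mul, norm_pow]
      ring
    have h1 : ‖p‖ ^ jk.1 ≤ ρ ^ jk.1 := pow_le_pow_left₀ (norm_nonneg p) hpρ _
    have h2 : ‖q‖ ^ jk.2 ≤ ρ ^ jk.2 := pow_le_pow_left₀ (norm_nonneg q) hqρ _
    have h4 : ‖(q ^ L)⁻¹‖ ≤ C / 2 := by
      have hh : (0:ℝ) ≤ ‖q‖ ^ L := by positivity
      rw [hCdef]; linarith
    have h5 : ‖p‖ ^ jk.1 * ‖q‖ ^ jk.2 ≤ ρ ^ (jk.1 + jk.2) := by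
      rw [pow_add]
      exact mul_le_mul h1 h2 (by positivity) (by positivity)
    rw [e]
    calc ‖ε‖ * (‖(q ^ L)⁻¹‖ * (‖p‖ ^ jk.1 * ‖q‖ ^ jk.2))
        ≤ 2 * (C / 2 * ρ ^ (jk.1 + jk.2)) := by
          apply mul_le_mul (by linarith [(hBn ε hε).2]) ?_ (by positivity) (by norm_num)
          exact mul_le_mul h4 h5 (by positivity) (div_nonneg hC0.le (by norm_num))
      _ = C * ρ ^ (jk.1 + jk.2) := by ring
  have htail : ∀ jk : ℕ × ℕ, jk ∉ T → C * ρ ^ (jk.1 + jk.2) ≤ 1 / 2 := by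
    intro jk h
    have hM' : M ≤ jk.1 + jk.2 := by
      rw [hTdef, Finset.mem_product, Finset.mem_range, Finset.mem_range] at h
      push_neg at h
      by_cases h1 : jk.1 < M
      · have := h h1; omega
      · omega
    exact le_trans (mul_le_mul_of_nonneg_left
      (pow_le_pow_of_le_one hρ0 hρ1.le hM') hC0.le) hCM
  have hsu : Summable (fun jk : ℕ × ℕ => C * ρ ^ (jk.1 + jk.2)) := by
    have h := ((summable_geometric_of_lt_one hρ0 hρ1).mul_of_nonneg
        (summable_geometric_of_lt_one hρ0 hρ1)
        (fun i => pow_nonneg hρ0 i) (fun i => pow_nonneg hρ0 i)).mul_left C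
    exact h.congr fun jk => by rw [pow_add]
  have hsNε : ∀ ε ∈ B, Summable (fun jk : ℕ × ℕ => ‖wN ε jk‖) := fun ε hε =>
    Summable.of_nonneg_of_le (fun _ => norm_nonneg _) (hbN ε hε) hsu
  have hsDε : ∀ ε ∈ B, Summable (fun jk : ℕ × ℕ => ‖wD ε jk‖) := fun ε hε =>
    Summable.of_nonneg_of_le (fun _ => norm_nonneg _) (hbD ε hε) hsu
  have hsmallN : ∀ ε ∈ B, ∀ jk ∉ T, ‖wN ε jk‖ ≤ 1 / 2 := fun ε hε jk h =>
    le_trans (hbN ε hε jk) (htail jk h)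
  have hsmallD : ∀ ε ∈ B, ∀ jk ∉ T, ‖wD ε jk‖ ≤ 1 / 2 := fun ε hε jk h =>
    le_trans (hbD ε hε jk) (htail jk h)
  -- the tail function
  set t : ℕ × ℕ → ℂ → ℂ := fun jk ε => if jk ∈ T then 0 else
    (Complex.log (1 - wN ε jk) - Complex.log (1 - wD ε jk)) with htdef
  set g : ℂ → ℂ := fun ε => ∑' jk : ℕ × ℕ, t jk ε with hgdef
  have hgcont : ContinuousOn g B := by
    rw [hgdef]
    apply continuousOn_tsum (u := fun jk : ℕ × ℕ => 3 * (C * ρ ^ (jk.1 + jk.2)))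
      ?_ (hsu.mul_left 3) ?_
    · intro jk
      by_cases hjk : jk ∈ T
      · simp only [htdef, if_pos hjk]
        exact continuousOn_const
      · simp only [htdef, if_neg hjk]
        have hcN : ContinuousOn (fun ε => wN ε jk) B := by
          apply ContinuousOn.mul (ContinuousOn.mul ?_ continuousOn_const) continuousOn_const
          exact ContinuousOn.inv₀ (continuousOn_id.mul continuousOn_const)
            (fun x hx => mul_ne_zero (hB0 x hx) (inv_ne_zero hqL))
        have hcD : ContinuousOn (fun ε => wD ε jk) B :=
          ContinuousOn.mul (ContinuousOn.mul
            (continuousOn_id.mul continuousOn_const) continuousOn_const) continuousOn_const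
        apply ContinuousOn.sub
        · apply ContinuousOn.clog (continuousOn_const.sub hcN)
          intro x hx
          show (1 : ℂ) - wN x jk ∈ slitPlane
          rw [show (1 : ℂ) - wN x jk = 1 + -(wN x jk) by ring]
          exact mem_slitPlane_of_norm_lt_one
            (by rw [norm_neg]; exact lt_of_le_of_lt (hsmallN x hx jk hjk) (by norm_num))
        · apply ContinuousOn.clog (continuousOn_const.sub hcD)
          intro x hx
          show (1 : ℂ) - wD x jk ∈ slitPlane
          rw [show (1 : ℂ) - wD x jk = 1 + -(wD x jk) by ring]
          exact mem_slitPlane_of_norm_lt_one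
            (by rw [norm_neg]; exact lt_of_le_of_lt (hsmallD x hx jk hjk) (by norm_num))
    · intro jk ε hε
      by_cases hjk : jk ∈ T
      · simp only [htdef, if_pos hjk, norm_zero]
        positivity
      · simp only [htdef, if_neg hjk]
        have e1 : ‖Complex.log (1 - wN ε jk)‖ ≤ 3 / 2 * ‖wN ε jk‖ := by
          rw [show (1 : ℂ) - wN ε jk = 1 + -(wN ε jk) by ring]
          have h' := Complex.norm_log_one_add_half_le_self (z := -(wN ε jk))
            (by rw [norm_neg]; exact hsmallN ε hε jk hjk)
          rwa [norm_neg] at h'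
        have e2 : ‖Complex.log (1 - wD ε jk)‖ ≤ 3 / 2 * ‖wD ε jk‖ := by
          rw [show (1 : ℂ) - wD ε jk = 1 + -(wD ε jk) by ring]
          have h' := Complex.norm_log_one_add_half_le_self (z := -(wD ε jk))
            (by rw [norm_neg]; exact hsmallD ε hε jk hjk)
          rwa [norm_neg] at h'
        calc ‖Complex.log (1 - wN ε jk) - Complex.log (1 - wD ε jk)‖
            ≤ ‖Complex.log (1 - wN ε jk)‖ + ‖Complex.log (1 - wD ε jk)‖ := norm_sub_le _ _
          _ ≤ 3 / 2 * ‖wN ε jk‖ + 3 / 2 * ‖wD ε jk‖ := add_le_add e1 e2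
          _ ≤ 3 / 2 * (C * ρ ^ (jk.1 + jk.2)) + 3 / 2 * (C * ρ ^ (jk.1 + jk.2)) :=
              add_le_add (mul_le_mul_of_nonneg_left (hbN ε hε jk) (by norm_num))
                (mul_le_mul_of_nonneg_left (hbD ε hε jk) (by norm_num))
          _ = 3 * (C * ρ ^ (jk.1 + jk.2)) := by ring
  set Tc : Set (ℕ × ℕ) := ((T : Finset (ℕ × ℕ)) : Set (ℕ × ℕ))ᶜ with hTcdef
  have hgsub : ∀ ε ∈ B, g ε
      = ∑' i : Tc, (Complex.log (1 - wN ε i.val) - Complex.log (1 - wD ε i.val)) := by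
    intro ε hε
    rw [hgdef]
    calc (∑' jk : ℕ × ℕ, t jk ε)
        = ∑' jk : ℕ × ℕ, Tc.indicator
            (fun jk => Complex.log (1 - wN ε jk) - Complex.log (1 - wD ε jk)) jk := by
          refine tsum_congr fun jk => ?_
          by_cases hjk : jk ∈ T <;>
            simp [htdef, hjk, Set.indicator_apply, hTcdef]
      _ = ∑' i : Tc, (Complex.log (1 - wN ε i.val) - Complex.log (1 - wD ε i.val)) :=
          (tsum_subtype Tc _).symm
  -- the limit function
  set Φ : ℂ → ℂ := fun ε => (1 - wN ε ((0 : ℕ), L))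
      * (∏ jk ∈ T.erase ((0 : ℕ), L), (1 - wN ε jk) / (1 - wD ε jk)) * Complex.exp (g ε)
    with hΦdef
  -- continuity of Φ at 1
  have hcwN : ∀ jk : ℕ × ℕ, ContinuousAt (fun ε => wN ε jk) 1 := by
    intro jk
    apply ContinuousAt.mul (ContinuousAt.mul ?_ continuousAt_const) continuousAt_const
    exact (continuousAt_id.mul continuousAt_const).inv₀
      (mul_ne_zero one_ne_zero (inv_ne_zero hqL))
  have hcwD : ∀ jk : ℕ × ℕ, ContinuousAt (fun ε => wD ε jk) 1 :=
    fun jk => ContinuousAt.mul (ContinuousAt.mul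
      (continuousAt_id.mul continuousAt_const) continuousAt_const) continuousAt_const
  have hwD1 : ∀ jk : ℕ × ℕ, wD 1 jk = (q ^ L)⁻¹ * p ^ jk.1 * q ^ jk.2 := by
    intro jk; simp [hwDdef]
  have hwN1 : ∀ jk : ℕ × ℕ, wN 1 jk = q ^ L * p ^ (jk.1 + 1) * q ^ (jk.2 + 1) := by
    intro jk; simp [hwNdef]
  have hD1ne : ∀ jk ∈ T.erase ((0 : ℕ), L), (1 : ℂ) - wD 1 jk ≠ 0 := by
    intro jk hjk
    rw [hwD1]
    refine den1_ne_zero hp hq hq0 hθ jk.1 jk.2 ?_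
    have h := Finset.ne_of_mem_erase hjk
    intro hcon
    exact h (by cases jk; simpa using hcon)
  have hΦc : ContinuousAt Φ 1 := by
    rw [hΦdef]
    apply ContinuousAt.mul (ContinuousAt.mul ?_ ?_) ?_
    · exact continuousAt_const.sub (hcwN _)
    · have ht : ∀ jk ∈ T.erase ((0 : ℕ), L), Tendsto
          (fun ε : ℂ => (1 - wN ε jk) / (1 - wD ε jk)) (𝓝 1)
          (𝓝 ((1 - wN 1 jk) / (1 - wD 1 jk))) := fun jk hjk =>
        Filter.Tendsto.div (continuousAt_const.sub (hcwN jk))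
          (continuousAt_const.sub (hcwD jk)) (hD1ne jk hjk)
      exact tendsto_finset_prod _ ht
    · exact (Complex.continuous_exp.continuousAt).comp (hgcont.continuousAt hBnhds)
  -- the eventual equality
  have hev : ∀ᶠ ε in 𝓝[{ε : ℂ | ∀ j k : ℕ, ε * q ^ (-(L : ℤ)) * p ^ j * q ^ k ≠ 1}] (1 : ℂ),
      (1 - ε) * egamma (ε * q ^ (-(L : ℤ))) p q = Φ ε := by
    filter_upwards [nhdsWithin_le_nhds hBnhds, self_mem_nhdsWithin] with ε hεB hεS
    have hε0 : ε ≠ 0 := hB0 ε hεB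
    have hD0 : ∀ jk : ℕ × ℕ, (1 : ℂ) - wD ε jk ≠ 0 := by
      intro jk h0
      rw [sub_eq_zero] at h0
      apply hεS jk.1 jk.2
      rw [hzL]
      exact h0.symm
    have hD0L : wD ε ((0 : ℕ), L) = ε := by
      simp only [hwDdef, pow_zero, mul_one]
      field_simp
    have hε1 : (1 : ℂ) - ε ≠ 0 := by
      have h := hD0 ((0 : ℕ), L)
      rwa [hD0L] at h
    have hsN := hsNε ε hεB
    have hsD := hsDε ε hεB
    have hN0t : ∀ i : Tc, (1 : ℂ) - wN ε i.val ≠ 0 := by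
      intro i
      exact ne_zero_of_norm_lt_one (lt_of_le_of_lt
        (hsmallN ε hεB i.val (fun hmem => i.2 hmem)) (by norm_num))
    have hPN : HasProd (fun i : Tc => 1 - wN ε i.val)
        (Complex.exp (∑' i : Tc, Complex.log (1 - wN ε i.val))) :=
      hasProd_one_sub (hsN.subtype _) hN0t
    have hPD : HasProd (fun i : Tc => ((1 : ℂ) - wD ε i.val)⁻¹)
        (Complex.exp (∑' i : Tc, -Complex.log (1 - wD ε i.val))) := by
      have hfun : (fun i : Tc => Complex.exp (-Complex.log (1 - wD ε i.val)))
          = fun i : Tc => ((1 : ℂ) - wD ε i.val)⁻¹ :=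
        funext fun i => by rw [Complex.exp_neg, Complex.exp_log (hD0 i.val)]
      exact hfun ▸ ((summable_log (hsD.subtype _)).neg.hasSum.cexp)
    have hgε : g ε = (∑' i : Tc, Complex.log (1 - wN ε i.val))
        + ∑' i : Tc, -Complex.log (1 - wD ε i.val) := by
      rw [hgsub ε hεB, Summable.tsum_sub (summable_log (hsN.subtype _)) (summable_log (hsD.subtype _)),
        tsum_neg]
      ring
    have hPtail : HasProd (fun i : Tc => (1 - wN ε i.val) / (1 - wD ε i.val))
        (Complex.exp (g ε)) := by
      have h := hPN.mul hPD
      rw [← Complex.exp_add, ← hgε] at h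
      have hfun : (fun i : Tc => (1 - wN ε i.val) * ((1 : ℂ) - wD ε i.val)⁻¹)
          = fun i : Tc => (1 - wN ε i.val) / (1 - wD ε i.val) :=
        funext fun i => (div_eq_mul_inv _ _).symm
      exact hfun ▸ h
    have hProd : HasProd (fun jk : ℕ × ℕ => (1 - wN ε jk) / (1 - wD ε jk))
        ((∏ jk ∈ T, (1 - wN ε jk) / (1 - wD ε jk)) * Complex.exp (g ε)) :=
      (T.hasProd fun jk => (1 - wN ε jk) / (1 - wD ε jk)).mul_compl hPtail
    have hegamma : egamma (ε * q ^ (-(L : ℤ))) p q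
        = (∏ jk ∈ T, (1 - wN ε jk) / (1 - wD ε jk)) * Complex.exp (g ε) := by
      have h1 : egamma (ε * q ^ (-(L : ℤ))) p q
          = ∏' jk : ℕ × ℕ, (1 - wN ε jk) / (1 - wD ε jk) := by
        rw [egamma, hzL]
      rw [h1, hProd.tprod_eq]
    rw [hegamma, ← Finset.mul_prod_erase T _ h0L, hD0L]
    simp only [hΦdef]
    have hinv : (1 - ε) * (1 - ε)⁻¹ = 1 := mul_inv_cancel₀ hε1
    rw [div_eq_mul_inv]
    linear_combination ((1 - wN ε ((0 : ℕ), L))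
      * (∏ jk ∈ T.erase ((0 : ℕ), L), (1 - wN ε jk) / (1 - wD ε jk))
      * Complex.exp (g ε)) * hinv
  -- the value of Φ at 1
  have hval : Φ 1
      = (qpoch p p * qpoch q q * ∏ j ∈ Finset.Icc 1 L, theta p (q ^ (-(j : ℤ))))⁻¹ := by
    have hsN1 : Summable (fun jk : ℕ × ℕ => Complex.log (1 - wN 1 jk)) :=
      summable_log (hsNε 1 hBmem)
    have hsD1 : Summable (fun jk : ℕ × ℕ => Complex.log (1 - wD 1 jk)) :=
      summable_log (hsDε 1 hBmem)
    have hN1ne : ∀ jk : ℕ × ℕ, (1 : ℂ) - wN 1 jk ≠ 0 := by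
      intro jk
      rw [hwN1]
      exact ne_zero_of_norm_lt_one (norm_facN hp hq L jk.1 jk.2)
    have hD01 : Complex.log (1 - wD 1 ((0 : ℕ), L)) = 0 := by
      rw [hwD1]
      simp only [pow_zero, mul_one]
      rw [inv_mul_cancel₀ hqL, sub_self, Complex.log_zero]
    have step1 : Φ 1 = Complex.exp (∑ jk ∈ T,
        (Complex.log (1 - wN 1 jk) - Complex.log (1 - wD 1 jk)) + g 1) := by
      simp only [hΦdef]
      have e1 : (1 : ℂ) - wN 1 ((0 : ℕ), L)
          = Complex.exp (Complex.log (1 - wN 1 ((0 : ℕ), L))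
              - Complex.log (1 - wD 1 ((0 : ℕ), L))) := by
        rw [hD01, sub_zero, Complex.exp_log (hN1ne _)]
      have e2 : (∏ jk ∈ T.erase ((0 : ℕ), L), (1 - wN 1 jk) / (1 - wD 1 jk))
          = ∏ jk ∈ T.erase ((0 : ℕ), L),
              Complex.exp (Complex.log (1 - wN 1 jk) - Complex.log (1 - wD 1 jk)) := by
        refine Finset.prod_congr rfl fun jk hjk => ?_
        rw [Complex.exp_sub, Complex.exp_log (hN1ne jk), Complex.exp_log (hD1ne jk hjk)]
      rw [e1, e2, ← Complex.exp_sum, ← Complex.exp_add, ← Complex.exp_add,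
        Finset.add_sum_erase T
          (fun jk => Complex.log (1 - wN 1 jk) - Complex.log (1 - wD 1 jk)) h0L]
    have step2 : (∑ jk ∈ T, (Complex.log (1 - wN 1 jk) - Complex.log (1 - wD 1 jk))) + g 1
        = (∑' jk : ℕ × ℕ, Complex.log (1 - wN 1 jk))
          - ∑' jk : ℕ × ℕ, Complex.log (1 - wD 1 jk) := by
      rw [hgsub 1 hBmem, ← Summable.tsum_sub hsN1 hsD1]
      exact Summable.sum_add_tsum_compl (hsN1.sub hsD1)
    have step3 : (∑' jk : ℕ × ℕ, Complex.log (1 - wN 1 jk))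
          - ∑' jk : ℕ × ℕ, Complex.log (1 - wD 1 jk)
        = -((∑' j : ℕ, Complex.log (1 - p * p ^ j)) + (∑' j : ℕ, Complex.log (1 - q * q ^ j))
          + ∑ m ∈ Finset.Icc 1 L, ((∑' j : ℕ, Complex.log (1 - (q ^ m)⁻¹ * p ^ j))
              + ∑' j : ℕ, Complex.log (1 - p * q ^ m * p ^ j))) := by
      have eN : (∑' jk : ℕ × ℕ, Complex.log (1 - wN 1 jk))
          = ∑' jk : ℕ × ℕ, Complex.log (1 - q ^ L * p ^ (jk.1 + 1) * q ^ (jk.2 + 1)) :=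
        tsum_congr fun jk => by rw [hwN1 jk]
      have eD : (∑' jk : ℕ × ℕ, Complex.log (1 - wD 1 jk))
          = ∑' jk : ℕ × ℕ, Complex.log (1 - (q ^ L)⁻¹ * p ^ jk.1 * q ^ jk.2) :=
        tsum_congr fun jk => by rw [hwD1 jk]
      rw [eN, eD]
      exact key_sum hp hq hq0 L
    rw [step1, step2, step3, ← rhs_eq hp hq hq0 hθ]
  have hmain : Tendsto Φ
      (𝓝[{ε : ℂ | ∀ j k : ℕ, ε * q ^ (-(L : ℤ)) * p ^ j * q ^ k ≠ 1}] 1) (𝓝 (Φ 1)) :=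
    hΦc.tendsto.mono_left nhdsWithin_le_nhds
  rw [← hval]
  exact hmain.congr' (hev.mono fun ε h => h.symm)
end
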